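/- arXiv:1408.5546 — 8 statements merged into one kernel-verified Lean document; each statement's English description precedes it below -/
import Mathlib

section
/- Let A be a C*-algebra, let a, b ∈ A be positive elements, and let α, β ≥ 0. Then (a + b - (α+β))₊ is Cuntz subequivalent (in A) to (a-α)₊ + (b-β)₊. -/
open Filter Topology

/-- Cuntz subequivalence: `a ≾ b` iff there is a sequence `vₙ` with `vₙ b vₙ* → a`. -/
def CuntzSubequiv (A : Type*) [Mul A] [Star A] [TopologicalSpace A] (a b : A) : Prop :=
  ∃ v : ℕ → A, Tendsto (fun n => v n * b * star (v n)) atTop (𝓝 a)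

/-- The cut-down `(a - ε)₊`, i.e. functional calculus of `a` with `λ ↦ max (λ - ε) 0`. -/
noncomputable def cutDown {A : Type*} [NonUnitalCStarAlgebra A] (a : A) (ε : ℝ) : A :=
  cfcₙ (fun t : ℝ => max (t - ε) 0) a

open scoped CStarAlgebra

section Aux

variable {A : Type*} [NonUnitalCStarAlgebra A] [PartialOrder A] [StarOrderedRing A]

set_option maxHeartbeats 2000000 in
/-- The key quantitative step: for every `ε, δ > 0` there is `v ∈ A` with
`‖v ((a-α)₊+(b-β)₊) v* - (a+b-(α+β+ε))₊‖ ≤ δ`. -/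
lemma cutDown_key (a b : A) (ha : 0 ≤ a) (hb : 0 ≤ b) (α β : ℝ) (hα : 0 ≤ α) (hβ : 0 ≤ β)
    {ε δ : ℝ} (hε : 0 < ε) (hδ : 0 < δ) :
    ∃ v : A, ‖v * (cutDown a α + cutDown b β) * star v - cutDown (a + b) (α + β + ε)‖ ≤ δ := by
  set γ : ℝ := α + β with hγdef
  have hγ : 0 ≤ γ := add_nonneg hα hβ
  -- work in the unitization
  set s : A⁺¹ := ((a + b : A) : A⁺¹) with hsdef
  have hs : (0 : A⁺¹) ≤ s := Unitization.inr_nonneg_iff.mpr (add_nonneg ha hb)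
  have hssa : IsSelfAdjoint s := .of_nonneg hs
  have hsspec : ∀ t ∈ spectrum ℝ s, 0 ≤ t := fun t ht => spectrum_nonneg_of_nonneg hs ht
  -- the functions
  set fε : ℝ → ℝ := fun t => max (t - (γ + ε)) 0 with hfεdef
  set φ : ℝ → ℝ := fun t => max 0 (min (2 / ε * (t - γ - ε / 2)) 1) with hφdef
  have hφcont : Continuous φ := by
    rw [hφdef]; fun_prop
  have hfεcont : Continuous fε := (continuous_id.sub continuous_const).max continuous_const
  have hφ0 : ∀ t, 0 ≤ φ t := fun t => le_max_left _ _
  have hφ1 : ∀ t, φ t ≤ 1 := fun t => max_le (by norm_num) (min_le_right _ _)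
  -- basic elements
  set x : A⁺¹ := cfc fε s with hxdef
  set q : A⁺¹ := cfc φ s with hqdef
  have hqsa : IsSelfAdjoint q := cfc_predicate φ s
  have hx0 : (0 : A⁺¹) ≤ x := cfc_nonneg fun t _ => le_max_right _ _
  set c₀ : A := cutDown a α + cutDown b β with hc₀def
  set c : A⁺¹ := (c₀ : A⁺¹) with hcdef
  have hc : (0 : A⁺¹) ≤ c := by
    rw [hcdef, Unitization.inr_nonneg_iff]
    have h1 : (0 : A) ≤ cutDown a α := cfcₙ_nonneg fun t _ => le_max_right _ _
    have h2 : (0 : A) ≤ cutDown b β := cfcₙ_nonneg fun t _ => le_max_right _ _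
    exact add_nonneg h1 h2
  -- `s - γ•1 ≤ c`
  have key_sub : ∀ (u : A) (ρ : ℝ), 0 ≤ ρ → 0 ≤ u →
      cfc (fun t : ℝ => t - ρ) (u : A⁺¹) ≤ ((cutDown u ρ : A) : A⁺¹) := by
    intro u ρ hρ hu
    have hu' : (0 : A⁺¹) ≤ (u : A⁺¹) := Unitization.inr_nonneg_iff.mpr hu
    rw [show ((cutDown u ρ : A) : A⁺¹) = cfc (fun t : ℝ => max (t - ρ) 0) (u : A⁺¹) from
      Unitization.real_cfcₙ_eq_cfc_inr u _ (by simp [max_eq_right, hρ])]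
    exact cfc_mono fun t _ => le_max_left _ _
  have he_c : cfc (fun t : ℝ => t - γ) s ≤ c := by
    have hsplit : cfc (fun t : ℝ => t - γ) s =
        cfc (fun t : ℝ => t - α) ((a : A⁺¹)) + cfc (fun t : ℝ => t - β) ((b : A⁺¹)) := by
      have h₁ : ∀ (u : A⁺¹) (ρ : ℝ), IsSelfAdjoint u →
          cfc (fun t : ℝ => t - ρ) u = u - algebraMap ℝ A⁺¹ ρ := by
        intro u ρ hu
        rw [cfc_sub (fun t : ℝ => t) (fun _ => ρ) u, cfc_id' ℝ u, cfc_const ρ u]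
      have ha' : IsSelfAdjoint ((a : A⁺¹)) := .of_nonneg (Unitization.inr_nonneg_iff.mpr ha)
      have hb' : IsSelfAdjoint ((b : A⁺¹)) := .of_nonneg (Unitization.inr_nonneg_iff.mpr hb)
      rw [h₁ s γ hssa, h₁ _ α ha', h₁ _ β hb', hsdef, Unitization.inr_add, hγdef, map_add]
      abel
    rw [hsplit, hcdef, hc₀def, Unitization.inr_add]
    exact add_le_add (key_sub a α hα ha) (key_sub b β hβ hb)
  -- `x ≤ q * c * q`
  have hxqcq : x ≤ q * c * q := by
    have hpt : ∀ t, fε t ≤ φ t * ((t - γ) * φ t) := by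
      intro t
      rcases le_or_gt (γ + ε) t with h | h
      · have h2 : (1 : ℝ) ≤ 2 / ε * (t - γ - ε / 2) := by
          rw [div_mul_eq_mul_div, le_div_iff₀ hε]; nlinarith
        have hφt : φ t = 1 := by
          rw [hφdef]; simp only [min_eq_right h2, max_eq_right (by norm_num : (0:ℝ) ≤ 1)]
        rw [hφt]
        simp only [one_mul, mul_one, hfεdef]
        exact max_le (by linarith) (by linarith)
      · have hL : fε t = 0 := max_eq_right (by linarith)
        rw [hL]
        rcases eq_or_lt_of_le (hφ0 t) with h0 | hpos
        · rw [← h0]; simp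
        · have hmin : 0 < min (2 / ε * (t - γ - ε / 2)) 1 := by
            rcases lt_max_iff.mp (show (0:ℝ) < φ t from hpos) with h' | h'
            · exact absurd h' (lt_irrefl 0)
            · exact h'
          have hX : 0 < 2 / ε * (t - γ - ε / 2) := lt_of_lt_of_le hmin (min_le_left _ _)
          have h2ε : (0:ℝ) < 2 / ε := by positivity
          have hw : 0 < t - γ - ε / 2 := by
            rcases lt_or_ge 0 (t - γ - ε / 2) with h' | h'
            · exact h'
            · exfalso; nlinarith [mul_nonpos_of_nonneg_of_nonpos h2ε.le h']
          have htγ : 0 ≤ t - γ := by linarith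
          exact mul_nonneg (hφ0 t) (mul_nonneg htγ (hφ0 t))
    have h1 : x ≤ cfc (fun t => φ t * ((t - γ) * φ t)) s := cfc_mono (fun t _ => hpt t)
      (hfεcont.continuousOn)
      ((hφcont.mul ((continuous_id.sub continuous_const).mul hφcont)).continuousOn)
    have h2 : cfc (fun t => φ t * ((t - γ) * φ t)) s = q * (cfc (fun t : ℝ => t - γ) s * q) := by
      rw [cfc_mul φ (fun t => (t - γ) * φ t) s hφcont.continuousOn
        (((continuous_id.sub continuous_const).mul hφcont).continuousOn),
        cfc_mul (fun t : ℝ => t - γ) φ s ((continuous_id.sub continuous_const).continuousOn)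
        hφcont.continuousOn]
    have h3 : q * (cfc (fun t : ℝ => t - γ) s * q) ≤ q * (c * q) := by
      have := hqsa.conjugate_le_conjugate he_c
      simpa [mul_assoc] using this
    calc x ≤ q * (cfc (fun t : ℝ => t - γ) s * q) := h2 ▸ h1
      _ ≤ q * (c * q) := h3
      _ = q * c * q := by rw [mul_assoc]
  set z : A⁺¹ := q * c * q with hzdef
  have hz : (0 : A⁺¹) ≤ z := by
    have := star_left_conjugate_nonneg hc q
    rwa [hqsa.star_eq, ← hzdef] at this
  have hzsa : IsSelfAdjoint z := .of_nonneg hz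
  have hzspec : ∀ t ∈ spectrum ℝ z, 0 ≤ t := fun t ht => spectrum_nonneg_of_nonneg hz ht
  -- the analytic approximation
  have hδ' : ∀ t ∈ spectrum ℝ z, 0 < t + δ := fun t ht => by
    have := hzspec t ht; linarith
  have hsqrt_cont : ContinuousOn (fun t : ℝ => (Real.sqrt (t + δ))⁻¹) (spectrum ℝ z) := by
    apply ContinuousOn.inv₀
    · exact (Real.continuous_sqrt.comp (continuous_id.add continuous_const)).continuousOn
    · intro t ht
      exact ne_of_gt (Real.sqrt_pos.mpr (hδ' t ht))
  set h : ℝ → ℝ := fun t => (Real.sqrt (t + δ))⁻¹ with hhdef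
  set g : ℝ → ℝ := fun t => h t * (t * h t) with hgdef
  set k : ℝ → ℝ := fun t => 1 - g t with hkdef
  have hgval : ∀ t, 0 ≤ t → g t = t / (t + δ) := by
    intro t ht
    have h1 : Real.sqrt (t + δ) * Real.sqrt (t + δ) = t + δ := Real.mul_self_sqrt (by linarith)
    have h2 : Real.sqrt (t + δ) ≠ 0 := ne_of_gt (Real.sqrt_pos.mpr (by linarith))
    rw [hgdef, hhdef]
    simp only
    rw [show (Real.sqrt (t + δ))⁻¹ * (t * (Real.sqrt (t + δ))⁻¹)
        = t * ((Real.sqrt (t + δ))⁻¹ * (Real.sqrt (t + δ))⁻¹) from by ring,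
      ← mul_inv, h1, ← div_eq_mul_inv]
  have hkval : ∀ t, 0 ≤ t → k t = δ / (t + δ) := by
    intro t ht
    have h0 : t + δ ≠ 0 := by positivity
    rw [hkdef]; simp only [hgval t ht]
    field_simp
    ring
  have hk0 : ∀ t, 0 ≤ t → 0 ≤ k t := by
    intro t ht; rw [hkval t ht]; positivity
  have htk : ∀ t, 0 ≤ t → t * k t ≤ δ := by
    intro t ht
    have h0 : 0 < t + δ := by linarith
    rw [hkval t ht, mul_div_assoc' , div_le_iff₀ h0]
    nlinarith
  -- square roots of `k` and of `fε`
  set r : A⁺¹ := cfc (fun t => Real.sqrt (k t)) z with hrdef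
  have hkcont : ContinuousOn k (spectrum ℝ z) := by
    apply continuousOn_const.sub
    exact hsqrt_cont.mul (continuousOn_id.mul hsqrt_cont)
  have hrcont : ContinuousOn (fun t => Real.sqrt (k t)) (spectrum ℝ z) :=
    Real.continuous_sqrt.comp_continuousOn hkcont
  have hrsa : IsSelfAdjoint r := cfc_predicate _ z
  have hr2 : r * r = cfc k z := by
    rw [hrdef, ← cfc_mul _ _ z hrcont hrcont]
    exact cfc_congr fun t ht => Real.mul_self_sqrt (hk0 t (hzspec t ht))
  set m : A⁺¹ := cfc (fun t => Real.sqrt (fε t)) s with hmdef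
  have hmcontf : ContinuousOn (fun t => Real.sqrt (fε t)) (spectrum ℝ s) :=
    (Real.continuous_sqrt.comp hfεcont).continuousOn
  have hmsa : IsSelfAdjoint m := cfc_predicate _ s
  have hm2 : m * m = x := by
    rw [hmdef, ← cfc_mul _ _ s hmcontf hmcontf, hxdef]
    exact cfc_congr fun t ht => Real.mul_self_sqrt (le_max_right _ _)
  set u' : A⁺¹ := cfc h z with hu'def
  have hu'sa : IsSelfAdjoint u' := cfc_predicate _ z
  -- u' * z * u' = cfc g z
  have huzu : u' * (z * u') = cfc g z := by
    rw [hgdef, cfc_mul h (fun t => t * h t) z hsqrt_cont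
      (continuousOn_id.mul hsqrt_cont),
      cfc_mul (fun t : ℝ => t) h z continuousOn_id hsqrt_cont, cfc_id' ℝ z hzsa]
  -- the element w and the conjugation computation
  set w : A⁺¹ := m * u' * q with hwdef
  have hstarw : star w = q * (u' * m) := by
    rw [hwdef, star_mul, star_mul, hmsa.star_eq, hu'sa.star_eq, hqsa.star_eq]
  have hconj : w * c * star w = m * cfc g z * m := by
    rw [hstarw, hwdef]
    have : m * u' * q * c * (q * (u' * m)) = m * (u' * (z * u')) * m := by
      rw [hzdef]; noncomm_ring
    rw [this, huzu]
  -- the difference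
  have hdiff : x - w * c * star w = m * cfc k z * m := by
    rw [hconj]
    have hck : cfc k z = 1 - cfc g z := by
      rw [hkdef, cfc_sub (fun _ : ℝ => (1:ℝ)) g z continuousOn_const
        (hsqrt_cont.mul (continuousOn_id.mul hsqrt_cont))]
      congr 1
      exact cfc_const_one ℝ z hzsa
    rw [hck, mul_sub, sub_mul, mul_one, hm2]
  -- norm estimate
  have hnorm : ‖x - w * c * star w‖ ≤ δ := by
    rw [hdiff, ← hr2]
    have hfact : m * (r * r) * m = star (r * m) * (r * m) := by
      rw [star_mul, hrsa.star_eq, hmsa.star_eq]; noncomm_ring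
    have h₁ : ‖m * (r * r) * m‖ = ‖r * m‖ * ‖r * m‖ := by
      rw [show m * (r * r) * m = m * (r * r) * m from rfl, hfact, CStarRing.norm_star_mul_self]
    have h₂ : ‖r * m‖ * ‖r * m‖ = ‖r * x * r‖ := by
      rw [← CStarRing.norm_self_mul_star]
      congr 1
      rw [star_mul, hrsa.star_eq, hmsa.star_eq, ← hm2]; noncomm_ring
    have hrxr : (0:A⁺¹) ≤ r * x * r := by
      have := star_left_conjugate_nonneg hx0 r
      rwa [hrsa.star_eq] at this
    have hle : r * x * r ≤ r * z * r := hrsa.conjugate_le_conjugate hxqcq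
    have h₃ : ‖r * x * r‖ ≤ ‖r * z * r‖ :=
      CStarAlgebra.norm_le_norm_of_nonneg_of_le hrxr hle
    have hrzr : r * z * r = cfc (fun t => Real.sqrt (k t) * (t * Real.sqrt (k t))) z := by
      rw [cfc_mul (fun t => Real.sqrt (k t)) (fun t => t * Real.sqrt (k t)) z hrcont
        (continuousOn_id.mul hrcont),
        cfc_mul (fun t : ℝ => t) (fun t => Real.sqrt (k t)) z continuousOn_id hrcont,
        cfc_id' ℝ z hzsa, hrdef]
      noncomm_ring
    have h₄ : ‖r * z * r‖ ≤ δ := by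
      rw [hrzr]
      refine norm_cfc_le hδ.le fun t ht => ?_
      have ht0 := hzspec t ht
      have hkt := hk0 t ht0
      have : Real.sqrt (k t) * (t * Real.sqrt (k t)) = t * k t := by
        rw [show Real.sqrt (k t) * (t * Real.sqrt (k t))
            = t * (Real.sqrt (k t) * Real.sqrt (k t)) by ring, Real.mul_self_sqrt hkt]
      rw [this, Real.norm_eq_abs, abs_of_nonneg (mul_nonneg ht0 hkt)]
      exact htk t ht0
    calc ‖m * (r * r) * m‖
        = ‖r * m‖ * ‖r * m‖ := h₁
      _ = ‖r * x * r‖ := h₂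
      _ ≤ ‖r * z * r‖ := h₃
      _ ≤ δ := h₄
  -- w comes from A
  have hfε0 : fε 0 = 0 := by
    rw [hfεdef]
    simp only [zero_sub]
    exact max_eq_right (by linarith)
  have hφzero : φ 0 = 0 := by
    rw [hφdef]
    simp only
    have h1 : 2 / ε * (0 - γ - ε / 2) < 0 := by
      apply mul_neg_of_pos_of_neg (by positivity)
      linarith
    rw [min_eq_left (by linarith), max_eq_left (by linarith)]
  have hxinr : x = ((cutDown (a + b) (α + β + ε) : A) : A⁺¹) := by
    simp only [cutDown]
    rw [Unitization.real_cfcₙ_eq_cfc_inr (a + b)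
      (fun t : ℝ => max (t - (α + β + ε)) 0) (max_eq_right (by linarith)), hxdef]
  have hfstm : m.fst = 0 := by
    have : m = ((cfcₙ (fun t => Real.sqrt (fε t)) (a + b) : A) : A⁺¹) := by
      rw [hmdef, Unitization.real_cfcₙ_eq_cfc_inr (a + b) _ (by rw [hfε0, Real.sqrt_zero])]
    rw [this, Unitization.fst_inr]
  have hfstq : q.fst = 0 := by
    have : q = ((cfcₙ φ (a + b) : A) : A⁺¹) := by
      rw [hqdef, Unitization.real_cfcₙ_eq_cfc_inr (a + b) φ hφzero]
    rw [this, Unitization.fst_inr]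
  have hfstw : w.fst = 0 := by
    rw [hwdef, Unitization.fst_mul, Unitization.fst_mul, hfstm, hfstq, zero_mul, mul_zero]
  refine ⟨w.snd, ?_⟩
  have hvw : ((w.snd : A) : A⁺¹) = w := by
    have := Unitization.inl_fst_add_inr_snd_eq w
    rwa [hfstw, Unitization.inl_zero, zero_add] at this
  have heq : ((w.snd * c₀ * star (w.snd)
      - cutDown (a + b) (α + β + ε) : A) : A⁺¹) = w * c * star w - x := by
    rw [Unitization.inr_sub, Unitization.inr_mul, Unitization.inr_mul, Unitization.inr_star,
      hvw, ← hxinr, ← hcdef]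
  calc ‖w.snd * c₀ * star (w.snd) - cutDown (a + b) (α + β + ε)‖
      = ‖((w.snd * c₀ * star (w.snd)
          - cutDown (a + b) (α + β + ε) : A) : A⁺¹)‖ := (Unitization.norm_inr (𝕜 := ℂ) _).symm
    _ = ‖w * c * star w - x‖ := by rw [heq]
    _ = ‖x - w * c * star w‖ := norm_sub_rev _ _
    _ ≤ δ := hnorm

/-- Moving the cut level by `ε` moves the cut-down by at most `ε` in norm. -/
lemma cutDown_diff_norm (u : A) (hu : 0 ≤ u) {ρ ε : ℝ} (hρ : 0 ≤ ρ) (hε : 0 ≤ ε) :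
    ‖cutDown u (ρ + ε) - cutDown u ρ‖ ≤ ε := by
  have hsa : IsSelfAdjoint ((u : A⁺¹)) := .of_nonneg (Unitization.inr_nonneg_iff.mpr hu)
  have h1 : ((cutDown u (ρ + ε) : A) : A⁺¹)
      = cfc (fun t : ℝ => max (t - (ρ + ε)) 0) (u : A⁺¹) := by
    simp only [cutDown]
    rw [Unitization.real_cfcₙ_eq_cfc_inr u (fun t : ℝ => max (t - (ρ + ε)) 0)
      (max_eq_right (by linarith))]
  have h2 : ((cutDown u ρ : A) : A⁺¹) = cfc (fun t : ℝ => max (t - ρ) 0) (u : A⁺¹) := by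
    simp only [cutDown]
    rw [Unitization.real_cfcₙ_eq_cfc_inr u (fun t : ℝ => max (t - ρ) 0)
      (max_eq_right (by linarith))]
  have hc1 : ContinuousOn (fun t : ℝ => max (t - (ρ + ε)) 0) (spectrum ℝ (u : A⁺¹)) := by
    fun_prop
  have hc2 : ContinuousOn (fun t : ℝ => max (t - ρ) 0) (spectrum ℝ (u : A⁺¹)) := by fun_prop
  rw [← Unitization.norm_inr (𝕜 := ℂ), Unitization.inr_sub, h1, h2,
    ← cfc_sub (fun t : ℝ => max (t - (ρ + ε)) 0) (fun t : ℝ => max (t - ρ) 0) (u : A⁺¹) hc1 hc2]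
  refine norm_cfc_le hε fun t ht => ?_
  calc ‖max (t - (ρ + ε)) 0 - max (t - ρ) 0‖
      = |max (t - (ρ + ε)) 0 - max (t - ρ) 0| := rfl
    _ ≤ |(t - (ρ + ε)) - (t - ρ)| := abs_max_sub_max_le_abs _ _ _
    _ = ε := by rw [show (t - (ρ + ε)) - (t - ρ) = -ε by ring, abs_neg, abs_of_nonneg hε]

end Aux

/-- Lemma 1.5: `(a + b - (α+β))₊ ≾_A (a-α)₊ + (b-β)₊`. -/
theorem cutDown_add_subequiv {A : Type*} [NonUnitalCStarAlgebra A]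
    [PartialOrder A] [StarOrderedRing A]
    (a b : A) (ha : 0 ≤ a) (hb : 0 ≤ b) (α β : ℝ) (hα : 0 ≤ α) (hβ : 0 ≤ β) :
    CuntzSubequiv A (cutDown (a + b) (α + β)) (cutDown a α + cutDown b β) := by
  have key := fun n : ℕ => cutDown_key a b ha hb α β hα hβ
    (ε := 1 / (n + 1)) (δ := 1 / (n + 1)) (by positivity) (by positivity)
  choose v hv using key
  refine ⟨v, ?_⟩
  rw [tendsto_iff_norm_sub_tendsto_zero]
  refine squeeze_zero (fun n => norm_nonneg _) (fun n => ?_)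
    (g := fun n : ℕ => 1 / (n + 1) + 1 / (n + 1)) ?_
  · calc ‖v n * (cutDown a α + cutDown b β) * star (v n) - cutDown (a + b) (α + β)‖
        = ‖(v n * (cutDown a α + cutDown b β) * star (v n)
              - cutDown (a + b) (α + β + 1 / (n + 1)))
            + (cutDown (a + b) (α + β + 1 / (n + 1)) - cutDown (a + b) (α + β))‖ := by
          congr 1; abel
      _ ≤ ‖v n * (cutDown a α + cutDown b β) * star (v n)
              - cutDown (a + b) (α + β + 1 / (n + 1))‖
            + ‖cutDown (a + b) (α + β + 1 / (n + 1)) - cutDown (a + b) (α + β)‖ :=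
          norm_add_le _ _
      _ ≤ 1 / (n + 1) + 1 / (n + 1) := by
          refine add_le_add (hv n) ?_
          exact cutDown_diff_norm (a + b) (add_nonneg ha hb) (add_nonneg hα hβ) (by positivity)
  · have h := tendsto_one_div_add_atTop_nhds_zero_nat (𝕜 := ℝ)
    simpa using h.add h
end

section
/- Let A be a C*-algebra and let a, b ∈ A satisfy 0 ≤ a ≤ b. Then for every ε > 0, (a - ε)₊ is Cuntz subequivalent to (b - ε)₊ in A. -/
open Filter Topology

section Aux

theorem CuntzSubequiv.trans' {A : Type*} [NonUnitalCStarAlgebra A] {x y z : A}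
    (h1 : CuntzSubequiv A x y) (h2 : CuntzSubequiv A y z) : CuntzSubequiv A x z := by
  obtain ⟨v, hv⟩ := h1
  obtain ⟨w, hw⟩ := h2
  have key : ∀ n : ℕ, ∃ m : ℕ,
      ‖v n * (w m * z * star (w m)) * star (v n) - v n * y * star (v n)‖ < 1/(n+1) := by
    intro n
    have h : Tendsto (fun m => v n * (w m * z * star (w m)) * star (v n)) atTop
        (𝓝 (v n * y * star (v n))) := ((hw.const_mul _).mul_const _)
    have := (Metric.tendsto_atTop.mp h (1/(n+1)) (by positivity))
    obtain ⟨N, hN⟩ := this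
    exact ⟨N, by simpa [dist_eq_norm] using hN N le_rfl⟩
  choose m hm using key
  refine ⟨fun n => v n * w (m n), ?_⟩
  rw [tendsto_iff_norm_sub_tendsto_zero]
  have hb : ∀ n : ℕ, ‖(fun n => v n * w (m n) * z * star (v n * w (m n))) n - x‖ ≤
      1/(n+1) + ‖v n * y * star (v n) - x‖ := by
    intro n
    calc ‖v n * w (m n) * z * star (v n * w (m n)) - x‖
        = ‖(v n * (w (m n) * z * star (w (m n))) * star (v n) - v n * y * star (v n))
            + (v n * y * star (v n) - x)‖ := by
          congr 1; simp only [star_mul]; noncomm_ring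
      _ ≤ _ := by
          refine (norm_add_le _ _).trans ?_
          gcongr
          exact (hm n).le
  refine squeeze_zero (fun n => norm_nonneg _) hb ?_
  have h1 : Tendsto (fun n : ℕ => 1/((n:ℝ)+1)) atTop (𝓝 0) :=
    tendsto_one_div_add_atTop_nhds_zero_nat
  have h2 : Tendsto (fun n => ‖v n * y * star (v n) - x‖) atTop (𝓝 0) := by
    rwa [tendsto_iff_norm_sub_tendsto_zero] at hv
  simpa using h1.add h2

lemma real_key {δ t : ℝ} (hδ : 0 < δ) (ht : 0 ≤ t) :
    0 ≤ t - t * (t^2/(t^2+δ))^2 ∧ t - t * (t^2/(t^2+δ))^2 ≤ Real.sqrt δ := by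
  have hu : 0 < t^2 + δ := by positivity
  set g : ℝ := t^2/(t^2+δ) with hg
  have hg0 : 0 ≤ g := by positivity
  have hg1 : g ≤ 1 := by
    rw [hg, div_le_one hu]; linarith
  have hg2 : g^2 ≤ 1 := by nlinarith
  constructor
  · nlinarith [mul_le_mul_of_nonneg_left hg2 ht]
  · have e1 : 1 - g = δ/(t^2+δ) := by rw [hg]; field_simp; ring
    have h1 : 1 - g^2 ≤ 2*δ/(t^2+δ) := by
      have e2 : 1 - g^2 = (1-g)*(1+g) := by ring
      rw [e2, e1]
      rw [div_mul_eq_mul_div, div_le_div_iff₀ hu hu]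
      nlinarith [mul_nonneg hδ.le hu.le]
    have h2 : t * (2*δ/(t^2+δ)) ≤ Real.sqrt δ := by
      rw [mul_div_assoc', div_le_iff₀ hu]
      have hs : Real.sqrt δ ^ 2 = δ := Real.sq_sqrt hδ.le
      have hs0 : 0 < Real.sqrt δ := Real.sqrt_pos.mpr hδ
      nlinarith [sq_nonneg (t - Real.sqrt δ)]
    calc t - t*g^2 = t * (1 - g^2) := by ring
      _ ≤ t * (2*δ/(t^2+δ)) := mul_le_mul_of_nonneg_left h1 ht
      _ ≤ Real.sqrt δ := h2

lemma sqrt_delta_tendsto : Tendsto (fun n : ℕ => Real.sqrt (1/(n+1))) atTop (𝓝 0) := by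
  have h1 : Tendsto (fun n : ℕ => 1/((n:ℝ)+1)) atTop (𝓝 0) :=
    tendsto_one_div_add_atTop_nhds_zero_nat
  exact (Real.continuous_sqrt.tendsto' 0 0 (by simp)).comp h1

lemma subequiv_cube {A : Type*} [NonUnitalCStarAlgebra A] [PartialOrder A] [StarOrderedRing A]
    {p : A} (hp : 0 ≤ p) : CuntzSubequiv A p (p*p*p) := by
  have hpsa : IsSelfAdjoint p := .of_nonneg hp
  have hδ : ∀ n : ℕ, (0:ℝ) < 1/(n+1) := fun n => by positivity
  have hcont : ∀ n : ℕ, Continuous (fun t : ℝ => t/(t^2 + 1/(n+1))) := fun n =>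
    continuous_id.div (by continuity) (fun x => by positivity)
  have hc3 : Continuous (fun t : ℝ => t*t*t) := by continuity
  refine ⟨fun n => cfcₙ (fun t : ℝ => t/(t^2 + 1/(n+1))) p, ?_⟩
  have hstar : ∀ n : ℕ, star (cfcₙ (fun t : ℝ => t/(t^2 + 1/(n+1))) p)
      = cfcₙ (fun t : ℝ => t/(t^2 + 1/(n+1))) p := by
    intro n
    have h : IsSelfAdjoint (cfcₙ (fun t : ℝ => t/(t^2 + 1/(n+1))) p) := cfcₙ_predicate _ p
    exact h.star_eq
  have hcube : p*p*p = cfcₙ (fun t : ℝ => t*t*t) p := by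
    conv_lhs => rw [← cfcₙ_id' ℝ p, ← cfcₙ_mul (fun x : ℝ => x) (fun x : ℝ => x) p,
      ← cfcₙ_mul (fun x : ℝ => x*x) (fun x : ℝ => x) p]
  have key : ∀ n : ℕ, cfcₙ (fun t : ℝ => t/(t^2 + 1/(n+1))) p * (p*p*p)
        * star (cfcₙ (fun t : ℝ => t/(t^2 + 1/(n+1))) p)
      = cfcₙ (fun t : ℝ => (t/(t^2 + 1/(n+1))) * (t*t*t) * (t/(t^2 + 1/(n+1)))) p := by
    intro n
    rw [hstar, hcube,
      ← cfcₙ_mul _ _ p ((hcont n).continuousOn) (by simp) (hc3.continuousOn) (by simp),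
      ← cfcₙ_mul (fun t : ℝ => t/(t^2 + 1/(n+1)) * (t*t*t)) _ p (((hcont n).mul hc3).continuousOn) (by simp)
        ((hcont n).continuousOn) (by simp)]
  rw [tendsto_iff_norm_sub_tendsto_zero]
  refine squeeze_zero (fun n => norm_nonneg _) (fun n => ?_) sqrt_delta_tendsto
  simp only
  rw [key]
  have hsub : cfcₙ (fun t : ℝ => (t/(t^2 + 1/(n+1))) * (t*t*t) * (t/(t^2 + 1/(n+1))) - t) p
      = cfcₙ (fun t : ℝ => (t/(t^2 + 1/(n+1))) * (t*t*t) * (t/(t^2 + 1/(n+1)))) p - p := by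
    rw [cfcₙ_sub (fun t : ℝ => (t/(t^2 + 1/(n+1))) * (t*t*t) * (t/(t^2 + 1/(n+1)))) _ p ((((hcont n).mul hc3).mul (hcont n)).continuousOn) (by simp)
      (continuous_id'.continuousOn) rfl, cfcₙ_id' ℝ p]
  rw [← hsub]
  refine norm_cfcₙ_le fun t ht => ?_
  have ht0 : 0 ≤ t := quasispectrum_nonneg_of_nonneg p hp t ht
  have hF : (t/(t^2 + 1/(n+1))) * (t*t*t) * (t/(t^2 + 1/(n+1)))
      = t * (t^2/(t^2 + 1/(n+1)))^2 := by
    field_simp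
  have hk := real_key (hδ n) ht0
  rw [Real.norm_eq_abs, abs_sub_comm, hF, abs_of_nonneg hk.1]
  exact hk.2

set_option maxHeartbeats 2000000 in
lemma subequiv_of_le {A : Type*} [NonUnitalCStarAlgebra A] [PartialOrder A] [StarOrderedRing A]
    {x y : A} (hx : 0 ≤ x) (hxy : x ≤ y) : CuntzSubequiv A x y := by
  have hy : 0 ≤ y := hx.trans hxy
  have hxsa : IsSelfAdjoint x := .of_nonneg hx
  have hysa : IsSelfAdjoint y := .of_nonneg hy
  set s := CFC.sqrt x with hs
  have hs0 : 0 ≤ s := CFC.sqrt_nonneg x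
  have hssa : IsSelfAdjoint s := .of_nonneg hs0
  have hss : s * s = x := CFC.sqrt_mul_sqrt_self x hx
  have hδ : ∀ n : ℕ, (0:ℝ) < 1/(n+1) := fun n => by positivity
  have hcf : ∀ n : ℕ, Continuous (fun t : ℝ => Real.sqrt t * t / (t^2 + 1/(n+1))) := fun n =>
    (Real.continuous_sqrt.mul continuous_id).div (by continuity) (fun t => by positivity)
  have hcg : ∀ n : ℕ, Continuous (fun t : ℝ => (t^2/(t^2 + 1/(n+1)))^2) := fun n =>
    ((continuous_pow 2).div (by continuity) (fun t => by positivity)).pow 2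
  refine ⟨fun n => s * cfcₙ (fun t : ℝ => Real.sqrt t * t / (t^2 + 1/(n+1))) y, ?_⟩
  set k : ℕ → A := fun n => cfcₙ (fun t : ℝ => (t^2/(t^2 + 1/(n+1)))^2) y with hk
  have hknn : ∀ n, 0 ≤ k n := fun n => cfcₙ_nonneg (fun t _ => by positivity)
  have hksa : ∀ n, IsSelfAdjoint (k n) := fun n => .of_nonneg (hknn n)
  -- step 1 : v n * y * star (v n) = s * k n * s
  have step1 : ∀ n : ℕ, (s * cfcₙ (fun t : ℝ => Real.sqrt t * t / (t^2 + 1/(n+1))) y) * y *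
      star (s * cfcₙ (fun t : ℝ => Real.sqrt t * t / (t^2 + 1/(n+1))) y) = s * k n * s := by
    intro n
    have hfsa : IsSelfAdjoint (cfcₙ (fun t : ℝ => Real.sqrt t * t / (t^2 + 1/(n+1))) y) :=
      cfcₙ_predicate _ y
    rw [star_mul, hfsa.star_eq, hssa.star_eq]
    have inner : k n = cfcₙ (fun t : ℝ => Real.sqrt t * t / (t^2 + 1/(n+1))) y * y *
        cfcₙ (fun t : ℝ => Real.sqrt t * t / (t^2 + 1/(n+1))) y := by
      have e1 : k n = cfcₙ (fun t : ℝ => (Real.sqrt t * t / (t^2 + 1/(n+1))) * t *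
          (Real.sqrt t * t / (t^2 + 1/(n+1)))) y := by
        refine cfcₙ_congr fun t ht => ?_
        have ht0 : 0 ≤ t := quasispectrum_nonneg_of_nonneg y hy t ht
        have hst : Real.sqrt t * Real.sqrt t = t := Real.mul_self_sqrt ht0
        have hu : (0:ℝ) < t^2 + 1/(n+1) := by positivity
        beta_reduce
        set u := t^2 + 1/((n:ℝ)+1) with hu'
        have hre : Real.sqrt t * t / u * t * (Real.sqrt t * t / u)
            = (Real.sqrt t * Real.sqrt t) * t^3 / u^2 := by ring
        simp only [hre, hst]
        ring
      rw [e1, cfcₙ_mul (fun t : ℝ => Real.sqrt t * t / (t^2 + 1/(n+1)) * t) _ y (((hcf n).mul continuous_id').continuousOn) (by simp)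
          ((hcf n).continuousOn) (by simp),
        cfcₙ_mul _ _ y ((hcf n).continuousOn) (by simp) continuous_id'.continuousOn rfl,
        cfcₙ_id' ℝ y]
    calc s * cfcₙ (fun t : ℝ => Real.sqrt t * t / (t^2 + 1/(n+1))) y * y *
          (cfcₙ (fun t : ℝ => Real.sqrt t * t / (t^2 + 1/(n+1))) y * s)
        = s * (cfcₙ (fun t : ℝ => Real.sqrt t * t / (t^2 + 1/(n+1))) y * y *
            cfcₙ (fun t : ℝ => Real.sqrt t * t / (t^2 + 1/(n+1))) y) * s := by
          simp only [mul_assoc]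
      _ = s * k n * s := by rw [← inner]
  -- Unitization facts
  have hkK : ∀ n : ℕ, ((k n : A) : Unitization ℂ A)
      = cfc (fun t : ℝ => (t^2/(t^2 + 1/(n+1)))^2) (y : Unitization ℂ A) := fun n =>
    Unitization.real_cfcₙ_eq_cfc_inr y _ (by norm_num)
  have expand : ∀ n : ℕ, ∀ c : A, ((1 : Unitization ℂ A) - (k n : A)) * c * (1 - (k n : A))
      = ((k n * c * k n - k n * c - c * k n + c : A) : Unitization ℂ A) := by
    intro n c
    simp only [sub_eq_add_neg, Unitization.inr_add, Unitization.inr_neg, Unitization.inr_mul]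
    noncomm_ring
  have hcomb_sa : ∀ (c : A), IsSelfAdjoint c → ∀ n : ℕ,
      IsSelfAdjoint (k n * c * k n - k n * c - c * k n + c) := by
    intro c hc n
    have h1 : star (k n * c * k n - k n * c - c * k n + c)
        = k n * c * k n - c * k n - k n * c + c := by
      simp only [star_sub, star_add, star_mul, (hksa n).star_eq, hc.star_eq, mul_assoc]
    rw [IsSelfAdjoint, h1]
    abel
  -- step 2: E ≤ E'
  have hle : ∀ n : ℕ, k n * x * k n - k n * x - x * k n + x
      ≤ k n * y * k n - k n * y - y * k n + y := by
    intro n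
    rw [← Unitization.inr_le_iff _ _ (hcomb_sa x hxsa n) (hcomb_sa y hysa n),
      ← expand n x, ← expand n y]
    have h1K : star ((1 : Unitization ℂ A) - (k n : A)) = 1 - (k n : A) := by
      simp only [star_sub, star_one, ← Unitization.inr_star, (hksa n).star_eq]
    simpa [h1K] using star_left_conjugate_le_conjugate
      ((Unitization.inr_le_iff x y hxsa hysa).mpr hxy) ((1 : Unitization ℂ A) - (k n : A))
  -- norm of E'
  have hnormE' : ∀ n : ℕ, ‖k n * y * k n - k n * y - y * k n + y‖ ≤ Real.sqrt (1/(n+1)) := by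
    intro n
    have hYsa : IsSelfAdjoint (y : Unitization ℂ A) := hysa.inr ℂ
    have hcfc : cfc (fun t : ℝ => (1 - (t^2/(t^2 + 1/(n+1)))^2) * t *
          (1 - (t^2/(t^2 + 1/(n+1)))^2)) (y : Unitization ℂ A)
        = ((1 : Unitization ℂ A) - (k n : A)) * (y : Unitization ℂ A) * (1 - (k n : A)) := by
      rw [cfc_mul (fun t : ℝ => (1 - (t^2/(t^2 + 1/(n+1)))^2) * t)
            (fun t : ℝ => 1 - (t^2/(t^2 + 1/(n+1)))^2) (y : Unitization ℂ A)
          (((continuous_const.sub (hcg n)).mul continuous_id').continuousOn)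
          ((continuous_const.sub (hcg n)).continuousOn),
        cfc_mul (fun t : ℝ => 1 - (t^2/(t^2 + 1/(n+1)))^2) (fun t : ℝ => t) (y : Unitization ℂ A)
          ((continuous_const.sub (hcg n)).continuousOn) continuous_id'.continuousOn,
        cfc_sub _ _ (y : Unitization ℂ A) continuous_const.continuousOn
          ((hcg n).continuousOn),
        cfc_const_one ℝ (y : Unitization ℂ A), cfc_id' ℝ (y : Unitization ℂ A), hkK n]
    rw [← Unitization.norm_inr (𝕜 := ℂ), ← expand n y, ← hcfc]
    refine norm_cfc_le (Real.sqrt_nonneg _) fun t ht => ?_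
    have ht0 : 0 ≤ t := spectrum_nonneg_of_nonneg (Unitization.inr_nonneg_iff.mpr hy) ht
    have hk2 := real_key (hδ n) ht0
    have hu : (0:ℝ) < t^2 + 1/(n+1) := by positivity
    have hg1 : (t^2/(t^2 + 1/(n+1)))^2 ≤ 1 := by
      refine pow_le_one₀ (by positivity) ?_
      rw [div_le_one hu]; linarith [hδ n]
    have hg0 : (0:ℝ) ≤ (t^2/(t^2 + 1/(n+1)))^2 := by positivity
    rw [Real.norm_eq_abs, abs_of_nonneg (by nlinarith)]
    nlinarith [hk2.1, hk2.2]
  -- step 3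
  have step3 : ∀ n : ℕ, ‖s * k n * s - x‖ ≤ ‖s‖ * Real.sqrt (Real.sqrt (1/(n+1))) := by
    intro n
    have hdstar : star (k n * s - s) = s * k n - s := by
      rw [star_sub, star_mul, (hksa n).star_eq, hssa.star_eq]
    have hE : (k n * s - s) * star (k n * s - s) = k n * x * k n - k n * x - x * k n + x := by
      rw [hdstar]
      have h2 : (k n * s - s) * (s * k n - s)
          = k n * (s*s) * k n - k n * (s*s) - (s*s) * k n + (s*s) := by noncomm_ring
      rw [h2, hss]
    have hd2 : ‖k n * s - s‖ * ‖k n * s - s‖ ≤ Real.sqrt (1/(n+1)) := by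
      rw [← CStarRing.norm_self_mul_star]
      refine le_trans ?_ (hnormE' n)
      refine CStarAlgebra.norm_le_norm_of_nonneg_of_le (mul_star_self_nonneg _) ?_
      rw [hE]; exact hle n
    have hd : ‖k n * s - s‖ ≤ Real.sqrt (Real.sqrt (1/(n+1))) := by
      have e := (Real.sqrt_sq (norm_nonneg (k n * s - s))).symm
      rw [e]
      refine Real.sqrt_le_sqrt ?_
      rw [sq]; exact hd2
    have hfac : s * k n * s - x = s * (k n * s - s) := by
      rw [mul_sub, ← mul_assoc, hss]
    rw [hfac]
    exact le_trans (norm_mul_le _ _) (by gcongr)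
  -- step 4: conclude
  rw [tendsto_iff_norm_sub_tendsto_zero]
  have hbound : Tendsto (fun n : ℕ => ‖s‖ * Real.sqrt (Real.sqrt (1/(n+1)))) atTop (𝓝 0) := by
    have h2 : Tendsto (fun n : ℕ => Real.sqrt (Real.sqrt (1/(n+1)))) atTop (𝓝 0) :=
      (Real.continuous_sqrt.tendsto' 0 0 (by simp)).comp sqrt_delta_tendsto
    simpa using h2.const_mul ‖s‖
  refine squeeze_zero (g := fun n : ℕ => ‖s‖ * Real.sqrt (Real.sqrt (1/(n+1))))
    (fun n => norm_nonneg _) (fun n => ?_) hbound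
  simp only
  rw [step1 n]
  exact step3 n

end Aux

set_option maxHeartbeats 2000000 in
/-- Lemma 1.7: if `0 ≤ a ≤ b` then `(a - ε)₊ ≾_A (b - ε)₊` for every `ε > 0`. -/
theorem cutDown_subequiv_of_le {A : Type*} [NonUnitalCStarAlgebra A]
    [PartialOrder A] [StarOrderedRing A]
    (a b : A) (ha : 0 ≤ a) (hab : a ≤ b) (ε : ℝ) (hε : 0 < ε) :
    CuntzSubequiv A (cutDown a ε) (cutDown b ε) := by
  have hf0 : max (0 - ε) 0 = (0:ℝ) := max_eq_right (by linarith)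
  have hfc : Continuous (fun t : ℝ => max (t - ε) 0) :=
    (continuous_id.sub continuous_const).max continuous_const
  set p : A := cutDown a ε with hpdef
  set q : A := cutDown b ε with hqdef
  have hp : 0 ≤ p := cfcₙ_nonneg fun t _ => le_max_right _ _
  have hq : 0 ≤ q := cfcₙ_nonneg fun t _ => le_max_right _ _
  have hpsa : IsSelfAdjoint p := .of_nonneg hp
  have hqsa : IsSelfAdjoint q := .of_nonneg hq
  -- p * a * p = cfcₙ (f t * t * f t) a
  have e1 : cfcₙ (fun t : ℝ => max (t - ε) 0 * t * max (t - ε) 0) a = p * a * p := by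
    rw [cfcₙ_mul (fun t : ℝ => max (t - ε) 0 * t) _ a ((hfc.mul continuous_id').continuousOn) (by simp [hf0, hε.le])
        hfc.continuousOn (by simp [hf0, hε.le]),
      cfcₙ_mul _ _ a hfc.continuousOn (by simp [hf0, hε.le]) continuous_id'.continuousOn rfl,
      cfcₙ_id' ℝ a]
    rfl
  have e2 : cfcₙ (fun t : ℝ => max (t - ε) 0 * max (t - ε) 0 * max (t - ε) 0) a = p*p*p := by
    rw [cfcₙ_mul (fun t : ℝ => max (t - ε) 0 * max (t - ε) 0) _ a ((hfc.mul hfc).continuousOn) (by simp [hf0, hε.le])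
        hfc.continuousOn (by simp [hf0, hε.le]),
      cfcₙ_mul _ _ a hfc.continuousOn (by simp [hf0, hε.le]) hfc.continuousOn (by simp [hf0, hε.le])]
    rfl
  have e3 : cfcₙ (fun t : ℝ => ε • (max (t - ε) 0 * max (t - ε) 0)) a = ε • (p * p) := by
    rw [cfcₙ_smul ε (fun t : ℝ => max (t - ε) 0 * max (t - ε) 0) a ((hfc.mul hfc).continuousOn) (by simp [hf0, hε.le]),
      cfcₙ_mul _ _ a hfc.continuousOn (by simp [hf0, hε.le]) hfc.continuousOn (by simp [hf0, hε.le])]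
    rfl
  -- Claim A : p * a * p = p*p*p + ε • (p*p)
  have claimA : p * a * p = p*p*p + ε • (p * p) := by
    rw [← e1, ← e2, ← e3, ← cfcₙ_add (fun t : ℝ => max (t - ε) 0 * max (t - ε) 0 * max (t - ε) 0)
      (fun t : ℝ => ε • (max (t - ε) 0 * max (t - ε) 0)) a
      ((hfc.mul hfc).mul hfc).continuousOn (by simp [hf0, hε.le])
      (((hfc.mul hfc).const_smul ε).continuousOn) (by simp [hf0, hε.le])]
    refine cfcₙ_congr fun t _ => ?_
    rcases le_or_gt t ε with h | h
    · have : max (t - ε) 0 = 0 := max_eq_right (by linarith)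
      simp [this]
    · have : max (t - ε) 0 = t - ε := max_eq_left (by linarith)
      simp only [this, smul_eq_mul]
      ring
  -- Claim B : p * a * p ≤ p * b * p
  have claimB : p * a * p ≤ p * b * p := by
    simpa [hpsa.star_eq] using star_left_conjugate_le_conjugate hab p
  -- Claim C : p * b * p ≤ p * q * p + ε • (p * p)
  have claimC : p * b * p ≤ p * q * p + ε • (p * p) := by
    rw [← sub_nonneg, ← Unitization.inr_nonneg_iff (a := p * q * p + ε • (p * p) - p * b * p)]
    have hqK : ((q : A) : Unitization ℂ A)
        = cfc (fun t : ℝ => max (t - ε) 0) (b : Unitization ℂ A) :=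
      Unitization.real_cfcₙ_eq_cfc_inr b _ hf0
    have hbsa : IsSelfAdjoint (b : Unitization ℂ A) :=
      (IsSelfAdjoint.of_nonneg (ha.trans hab)).inr ℂ
    have hC : (0 : Unitization ℂ A)
        ≤ cfc (fun t : ℝ => max (t - ε) 0 + ε - t) (b : Unitization ℂ A) :=
      cfc_nonneg fun t _ => by
        have := le_max_left (t - ε) (0:ℝ); linarith
    have hCeq : cfc (fun t : ℝ => max (t - ε) 0 + ε - t) (b : Unitization ℂ A)
        = (q : Unitization ℂ A) + ε • 1 - (b : Unitization ℂ A) := by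
      rw [cfc_sub (fun t : ℝ => max (t - ε) 0 + ε) _ (b : Unitization ℂ A)
          ((hfc.add continuous_const).continuousOn) continuous_id'.continuousOn,
        cfc_add (b : Unitization ℂ A) (fun t : ℝ => max (t - ε) 0) (fun _ : ℝ => ε)
          hfc.continuousOn continuous_const.continuousOn,
        cfc_const ε (b : Unitization ℂ A), cfc_id' ℝ (b : Unitization ℂ A), hqK,
        Algebra.algebraMap_eq_smul_one]
    have hPCP : (0 : Unitization ℂ A) ≤ (p : Unitization ℂ A) *
        ((q : Unitization ℂ A) + ε • 1 - (b : Unitization ℂ A)) * (p : Unitization ℂ A) := by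
      rw [← hCeq]
      have := star_left_conjugate_nonneg hC (p : Unitization ℂ A)
      rwa [(hpsa.inr ℂ).star_eq] at this
    have hexp : (p : Unitization ℂ A) *
        ((q : Unitization ℂ A) + ε • 1 - (b : Unitization ℂ A)) * (p : Unitization ℂ A)
        = ((p * q * p + ε • (p * p) - p * b * p : A) : Unitization ℂ A) := by
      simp only [Unitization.inr_add, Unitization.inr_sub, Unitization.inr_mul,
        Unitization.inr_smul]
      rw [mul_sub, mul_add, sub_mul, add_mul, mul_smul_comm, mul_one, smul_mul_assoc]
    rwa [← hexp]
  -- cancellation : p*p*p ≤ p*q*p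
  have hcancel : p*p*p ≤ p*q*p := by
    have h1 : p*p*p + ε • (p * p) ≤ p*q*p + ε • (p * p) := by
      rw [← claimA]; exact claimB.trans claimC
    exact le_of_add_le_add_right h1
  -- assemble
  have hppp : (0:A) ≤ p*p*p := by
    rw [← e2]
    exact cfcₙ_nonneg fun t _ => by positivity
  have h1 : CuntzSubequiv A p (p*p*p) := subequiv_cube hp
  have h2 : CuntzSubequiv A (p*p*p) (p*q*p) := subequiv_of_le hppp hcancel
  have h3 : CuntzSubequiv A (p*q*p) q :=
    ⟨fun _ => p, by simpa [hpsa.star_eq] using tendsto_const_nhds⟩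
  exact h1.trans' (h2.trans' h3)
end

section
/- Let A be a C*-algebra, let n be a positive integer, and let a₁, …, aₙ ∈ A. Set a = a₁ + ⋯ + aₙ and x = a₁*a₁ + ⋯ + aₙ*aₙ. Then a*a belongs to the hereditary subalgebra generated by x, i.e., a*a ∈ closure(x A x). -/
open scoped NNReal

lemma aux_smul_nonneg {R : Type*} [NonUnitalRing R] [PartialOrder R] [StarRing R]
    [StarOrderedRing R] [Module ℝ R] [StarModule ℝ R] [IsScalarTower ℝ R R]
    [SMulCommClass ℝ R R] {r : ℝ} (hr : 0 ≤ r) {w : R} (hw : 0 ≤ w) : 0 ≤ r • w := by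
  rw [StarOrderedRing.nonneg_iff] at hw ⊢
  induction hw using AddSubmonoid.closure_induction with
  | mem z hz =>
    obtain ⟨s, rfl⟩ := hz
    refine AddSubmonoid.subset_closure ⟨Real.sqrt r • s, ?_⟩
    show star (Real.sqrt r • s) * (Real.sqrt r • s) = r • (star s * s)
    rw [star_smul, star_trivial, smul_mul_smul_comm, Real.mul_self_sqrt hr]
  | zero => simpa using AddSubmonoid.zero_mem _
  | add z w _ _ hz hw => rw [smul_add]; exact AddSubmonoid.add_mem _ hz hw

lemma aux_cauchy {R : Type*} [NonUnitalRing R] [PartialOrder R] [StarRing R]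
    [StarOrderedRing R] [Module ℝ R] [StarModule ℝ R] [IsScalarTower ℝ R R]
    [SMulCommClass ℝ R R] {n : ℕ} (c : Fin n → R) :
    star (∑ k, c k) * (∑ k, c k) ≤ n • (∑ k, star (c k) * c k) := by
  have key : (0:R) ≤ ∑ j, ∑ k, star (c j - c k) * (c j - c k) :=
    Finset.sum_nonneg fun j _ ↦ Finset.sum_nonneg fun k _ ↦ star_mul_self_nonneg _
  have expand : ∑ j, ∑ k, star (c j - c k) * (c j - c k)
      = (2:ℝ) • (n • (∑ k, star (c k) * c k) - star (∑ k, c k) * (∑ k, c k)) := by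
    have h1 : ∀ j k, star (c j - c k) * (c j - c k)
        = star (c j) * c j + star (c k) * c k - star (c j) * c k - star (c k) * c j := by
      intro j k; simp [star_sub, sub_mul, mul_sub]; abel
    simp only [h1, Finset.sum_sub_distrib, Finset.sum_add_distrib, Finset.sum_const,
      Finset.card_univ, Fintype.card_fin, ← Finset.mul_sum, ← Finset.sum_mul, ← star_sum]
    rw [smul_sub, two_smul, two_smul]
    rw [Finset.smul_sum]
    abel
  rw [← sub_nonneg]
  have := key
  rw [expand] at this
  have h2 : (0:R) ≤ (2:ℝ)⁻¹ • ((2:ℝ) • (n • (∑ k, star (c k) * c k) - star (∑ k, c k) * (∑ k, c k))) :=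
    aux_smul_nonneg (by norm_num) this
  rwa [smul_smul, inv_mul_cancel₀ (by norm_num), one_smul] at h2

lemma aux_P1 (k : ℕ) (t : ℝ≥0) : (k:ℝ≥0)^2 * t * (1 + k * t)⁻¹ ≤ (k:ℝ≥0) := by
  rw [← NNReal.coe_le_coe]
  push_cast
  rw [mul_inv_le_iff₀ (by positivity)]
  nlinarith [t.coe_nonneg, (Nat.cast_nonneg k : (0:ℝ) ≤ k)]

lemma aux_P2 (k : ℕ) (t : ℝ≥0) :
    (k:ℝ≥0) - (k:ℝ≥0)^2 * t * (1 + k * t)⁻¹ = (k:ℝ≥0) * (1 + k * t)⁻¹ := by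
  rw [tsub_eq_iff_eq_add_of_le (aux_P1 k t), ← NNReal.coe_inj]
  push_cast
  field_simp

lemma aux_P3 (k : ℕ) (t : ℝ≥0) :
    t * ((k:ℝ≥0) - (k:ℝ≥0)^2 * t * (1 + k * t)⁻¹) = (k:ℝ≥0) * t * (1 + k * t)⁻¹ := by
  rw [aux_P2]; ring

lemma aux_P4 (k : ℕ) (t : ℝ≥0) : (k:ℝ≥0) * t * (1 + k * t)⁻¹ ≤ 1 := by
  rw [← NNReal.coe_le_coe]
  push_cast
  rw [mul_inv_le_iff₀ (by positivity)]
  nlinarith [t.coe_nonneg, (Nat.cast_nonneg k : (0:ℝ) ≤ k)]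

lemma aux_P5 (k : ℕ) (hk : 0 < k) (t : ℝ≥0) :
    (1 - (k:ℝ≥0) * t * (1 + k * t)⁻¹) * (t * (1 - (k:ℝ≥0) * t * (1 + k * t)⁻¹))
      ≤ ((k:ℝ≥0))⁻¹ := by
  have h1 : (1:ℝ≥0) - (k:ℝ≥0) * t * (1 + k * t)⁻¹ = (1 + k * t)⁻¹ := by
    rw [tsub_eq_iff_eq_add_of_le (aux_P4 k t), ← NNReal.coe_inj]
    push_cast
    field_simp
  rw [h1]
  have hk' : (0:ℝ) < k := by exact_mod_cast hk
  rw [← NNReal.coe_le_coe]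
  push_cast
  have h2 : ((1:ℝ)+k*t)⁻¹ * (↑t * ((1:ℝ)+k*t)⁻¹) = t/(((1:ℝ)+k*t)^2) := by
    rw [pow_two, div_eq_mul_inv, mul_inv]
    ring
  rw [h2, div_le_iff₀ (by positivity)]
  rw [inv_mul_eq_div, le_div_iff₀ hk']
  nlinarith [t.coe_nonneg]

lemma aux_approx {B : Type*} [CStarAlgebra B] [PartialOrder B] [StarOrderedRing B]
    (X w : B) (hX : 0 ≤ X) (N : ℝ) (hN : 0 ≤ N) (hwX : star w * w ≤ N • X)
    {ε : ℝ} (hε : 0 < ε) :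
    ∃ (k : ℕ) (R : B), 0 < k ∧ R = cfc (fun t : ℝ≥0 ↦ (k:ℝ≥0)^2 * t * (1 + k * t)⁻¹) X ∧
      ‖star w * w - X * ((k:ℝ≥0) • 1 - R) * (star w * w) * (((k:ℝ≥0) • 1 - R) * X)‖ < ε := by
  set c : ℝ := ε / (2 * (‖w‖ + 1)) with hc
  have hc0 : 0 < c := by positivity
  obtain ⟨k, hk⟩ := exists_nat_gt (N / c ^ 2)
  have hkpos : 0 < k := by
    by_contra h
    have : k = 0 := by omega
    subst this
    have : (0:ℝ) ≤ N / c ^ 2 := by positivity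
    simp at hk
    linarith
  have hkR : (0:ℝ) < k := by exact_mod_cast hkpos
  have hNk : N * (k:ℝ)⁻¹ < c ^ 2 := by
    rw [div_lt_iff₀ (by positivity)] at hk
    rw [mul_inv_lt_iff₀ hkR]
    linarith
  -- functions
  set rf : ℝ≥0 → ℝ≥0 := fun t ↦ (k:ℝ≥0)^2 * t * (1 + k * t)⁻¹ with hrf
  set hf : ℝ≥0 → ℝ≥0 := fun t ↦ (k:ℝ≥0) * t * (1 + k * t)⁻¹ with hhf
  have hrf_cont : ContinuousOn rf (spectrum ℝ≥0 X) :=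
    Continuous.continuousOn (by
      apply Continuous.mul (by fun_prop)
      exact (continuous_const.add (continuous_const.mul continuous_id)).inv₀
        fun t ↦ ne_of_gt (by positivity : (0:ℝ≥0) < 1 + k * t))
  have hhf_cont : ContinuousOn hf (spectrum ℝ≥0 X) :=
    Continuous.continuousOn (by
      apply Continuous.mul (by fun_prop)
      exact (continuous_const.add (continuous_const.mul continuous_id)).inv₀
        fun t ↦ ne_of_gt (by positivity : (0:ℝ≥0) < 1 + k * t))
  set R : B := cfc rf X with hR
  set Q : B := (k:ℝ≥0) • 1 - R with hQdef
  set Y : B := cfc hf X with hY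
  set E : B := 1 - Y with hEdef
  -- Q as cfc
  have hQ : Q = cfc (fun t ↦ (k:ℝ≥0) - rf t) X := by
    rw [cfc_tsub _ _ X (fun t _ ↦ aux_P1 k t) hX continuousOn_const hrf_cont,
      cfc_const _ _ hX, Algebra.algebraMap_eq_smul_one]
  have hXQ : X * Q = Y := by
    rw [hQ]
    nth_rewrite 1 [← cfc_id ℝ≥0 X hX]
    rw [← cfc_mul id (fun t ↦ (k:ℝ≥0) - rf t) X continuousOn_id
      (continuousOn_const.sub hrf_cont)]
    exact cfc_congr fun t _ ↦ by simpa using aux_P3 k t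
  have hQsa : IsSelfAdjoint Q := by
    rw [hQ]
    exact IsSelfAdjoint.of_nonneg (cfc_predicate _ _)
  have hXsa : IsSelfAdjoint X := .of_nonneg hX
  have hYsa : IsSelfAdjoint Y := .of_nonneg (cfc_predicate _ _)
  have hQX : Q * X = Y := by
    have := congrArg star hXQ
    rwa [star_mul, hQsa.star_eq, hXsa.star_eq, hYsa.star_eq] at this
  -- E as cfc
  have hE : E = cfc (fun t ↦ 1 - hf t) X := by
    rw [hEdef, cfc_tsub _ _ X (fun t _ ↦ aux_P4 k t) hX continuousOn_const hhf_cont,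
      cfc_const_one ℝ≥0 X hX]
  have hEsa : IsSelfAdjoint E := by
    rw [hE]; exact .of_nonneg (cfc_predicate _ _)
  -- norm bounds
  have hY1 : ‖Y‖ ≤ 1 := by
    have h1 : ‖Y‖₊ ≤ 1 := hY ▸ nnnorm_cfc_nnreal_le (fun t _ ↦ aux_P4 k t)
    calc ‖Y‖ = (‖Y‖₊ : ℝ) := (coe_nnnorm _).symm
    _ ≤ ((1:ℝ≥0) : ℝ) := by exact_mod_cast h1
    _ = 1 := by norm_num
  have hEXE : ‖E * X * E‖ ≤ (k:ℝ)⁻¹ := by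
    have h1 : E * X * E = cfc (fun t ↦ (1 - hf t) * (t * (1 - hf t))) X := by
      rw [hE]
      nth_rewrite 2 [← cfc_id ℝ≥0 X hX]
      rw [← cfc_mul (fun t ↦ 1 - hf t) id X (continuousOn_const.sub hhf_cont)
          continuousOn_id,
        ← cfc_mul (fun t ↦ (1 - hf t) * id t) (fun t ↦ 1 - hf t) X
          ((continuousOn_const.sub hhf_cont).mul continuousOn_id)
          (continuousOn_const.sub hhf_cont)]
      exact cfc_congr fun t _ ↦ by simp [id]; ring
    have h2 : ‖E * X * E‖₊ ≤ ((k:ℝ≥0))⁻¹ :=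
      h1 ▸ nnnorm_cfc_nnreal_le (fun t _ ↦ aux_P5 k hkpos t)
    calc ‖E * X * E‖ = (‖E * X * E‖₊ : ℝ) := (coe_nnnorm _).symm
    _ ≤ (((k:ℝ≥0))⁻¹ : ℝ) := by exact_mod_cast h2
    _ = (k:ℝ)⁻¹ := by push_cast; ring
  set b' : B := star w * w with hb'
  have hb'sa : IsSelfAdjoint b' := IsSelfAdjoint.star_mul_self w
  have hEbE_le : E * b' * E ≤ E * (N • X) * E := by
    have := star_left_conjugate_le_conjugate hwX E
    rwa [hEsa.star_eq] at this
  have hEbE_nn : 0 ≤ E * b' * E := by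
    have := star_left_conjugate_nonneg (star_mul_self_nonneg w) E
    rwa [hEsa.star_eq] at this
  have hnorm1 : ‖E * b' * E‖ ≤ N * (k:ℝ)⁻¹ := by
    calc ‖E * b' * E‖ ≤ ‖E * (N • X) * E‖ :=
        CStarAlgebra.norm_le_norm_of_nonneg_of_le hEbE_nn hEbE_le
    _ = N * ‖E * X * E‖ := by
        rw [mul_smul_comm, smul_mul_assoc, norm_smul, Real.norm_of_nonneg hN]
    _ ≤ N * (k:ℝ)⁻¹ := mul_le_mul_of_nonneg_left hEXE hN
  set z : B := E * star w with hz
  have hzsq : ‖z‖ * ‖z‖ = ‖E * b' * E‖ := by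
    rw [← CStarRing.norm_self_mul_star (x := z)]
    congr 1
    rw [hz, star_mul, star_star, hEsa.star_eq, hb']
    noncomm_ring
  have hzc : ‖z‖ < c := by
    have h2 : ‖z‖ * ‖z‖ < c * c := by
      calc ‖z‖ * ‖z‖ = ‖E * b' * E‖ := hzsq
      _ ≤ N * (k:ℝ)⁻¹ := hnorm1
      _ < c ^ 2 := hNk
      _ = c * c := sq c
    by_contra h
    push_neg at h
    nlinarith [norm_nonneg z]
  refine ⟨k, R, hkpos, hR, ?_⟩
  have hfinal1 : X * Q * b' * (Q * X) = Y * (b' * Y) := by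
    rw [hXQ, hQX, mul_assoc]
  have hdecomp : b' - Y * (b' * Y) = E * b' + Y * (b' * E) := by
    rw [hEdef]; noncomm_ring
  have hEb : ‖E * b'‖ ≤ ‖z‖ * ‖w‖ := by
    rw [hb', hz, ← mul_assoc]
    exact norm_mul_le _ _
  have hbE : ‖b' * E‖ ≤ ‖z‖ * ‖w‖ := by
    calc ‖b' * E‖ = ‖star (b' * E)‖ := (norm_star _).symm
    _ = ‖E * b'‖ := by rw [star_mul, hEsa.star_eq, hb'sa.star_eq]
    _ ≤ ‖z‖ * ‖w‖ := hEb
  have hstep : 2 * (‖z‖ * ‖w‖) < ε := by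
    have hw1 : (0:ℝ) < ‖w‖ + 1 := by positivity
    have h3 : ‖z‖ * ‖w‖ < c * (‖w‖ + 1) := by nlinarith [norm_nonneg z, norm_nonneg w]
    have h4 : 2 * (c * (‖w‖ + 1)) = ε := by rw [hc]; field_simp
    linarith
  calc ‖b' - X * Q * b' * (Q * X)‖
      = ‖E * b' + Y * (b' * E)‖ := by rw [hfinal1, hdecomp]
    _ ≤ ‖E * b'‖ + ‖Y * (b' * E)‖ := norm_add_le _ _
    _ ≤ ‖E * b'‖ + ‖Y‖ * ‖b' * E‖ := by gcongr; exact norm_mul_le _ _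
    _ ≤ ‖z‖ * ‖w‖ + 1 * (‖z‖ * ‖w‖) :=
      add_le_add hEb (mul_le_mul hY1 hbE (norm_nonneg _) zero_le_one)
    _ = 2 * (‖z‖ * ‖w‖) := by ring
    _ < ε := hstep

/-- Lemma 1.12: with `a = a₁ + ⋯ + aₙ` and `x = a₁* a₁ + ⋯ + aₙ* aₙ`, the element `a* a`
lies in the hereditary subalgebra generated by `x`, i.e. `a* a ∈ closure (x A x)`. -/
theorem star_mul_self_mem_hereditary {A : Type*} [NonUnitalCStarAlgebra A]
    (n : ℕ) (hn : 0 < n) (a : Fin n → A) :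
    star (∑ k, a k) * (∑ k, a k) ∈
      closure {y : A | ∃ d : A,
        y = (∑ k, star (a k) * a k) * d * (∑ k, star (a k) * a k)} := by
  letI : PartialOrder (Unitization ℂ A) := CStarAlgebra.spectralOrder _
  letI : StarOrderedRing (Unitization ℂ A) := CStarAlgebra.spectralOrderedRing _
  rw [Metric.mem_closure_iff]
  intro ε hε
  set S : A := ∑ k, a k with hS
  set x : A := ∑ k, star (a k) * a k with hx
  set w : Unitization ℂ A := (S : Unitization ℂ A) with hw
  set X : Unitization ℂ A := ((x : A) : Unitization ℂ A) with hX
  have hweq : w = ∑ k, ((a k : A) : Unitization ℂ A) := by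
    rw [hw, hS]
    exact map_sum (Unitization.inrNonUnitalStarAlgHom ℂ A) a Finset.univ
  have hXeq : X = ∑ k, star ((a k : A) : Unitization ℂ A) * ((a k : A) : Unitization ℂ A) := by
    rw [hX, hx]
    refine (map_sum (Unitization.inrNonUnitalStarAlgHom ℂ A) _ Finset.univ).trans ?_
    exact Finset.sum_congr rfl fun k _ ↦ by simp [map_mul, map_star]
  have hX0 : 0 ≤ X := by
    rw [hXeq]
    exact Finset.sum_nonneg fun k _ ↦ star_mul_self_nonneg _
  have hwX : star w * w ≤ (n:ℝ) • X := by
    rw [hweq, hXeq]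
    calc star (∑ k, ((a k : A) : Unitization ℂ A)) * (∑ k, ((a k : A) : Unitization ℂ A))
        ≤ n • ∑ k, star ((a k : A) : Unitization ℂ A) * ((a k : A) : Unitization ℂ A) :=
          aux_cauchy _
    _ = (n:ℝ) • ∑ k, star ((a k : A) : Unitization ℂ A) * ((a k : A) : Unitization ℂ A) :=
          (Nat.cast_smul_eq_nsmul ℝ n _).symm
  obtain ⟨k, R, hkpos, hReq, hclose⟩ :=
    aux_approx X w hX0 (n:ℝ) (by positivity) hwX hε
  set Q : Unitization ℂ A := (k:ℝ≥0) • 1 - R with hQ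
  set d : A := (Q * (star w * w) * Q).snd with hd
  have hfst : (Q * (star w * w) * Q).fst = 0 := by
    simp [Unitization.fst_mul, hw]
  have hdB : ((d : A) : Unitization ℂ A) = Q * (star w * w) * Q := by
    conv_rhs => rw [← Unitization.inl_fst_add_inr_snd_eq (Q * (star w * w) * Q)]
    rw [hfst]
    simp [hd]
  refine ⟨x * d * x, ⟨d, rfl⟩, ?_⟩
  rw [dist_eq_norm, ← Unitization.norm_inr (𝕜 := ℂ)]
  have hcast : ((star S * S - x * d * x : A) : Unitization ℂ A)
      = star w * w - X * Q * (star w * w) * (Q * X) := by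
    rw [Unitization.inr_sub ℂ, Unitization.inr_mul ℂ, Unitization.inr_mul ℂ,
      Unitization.inr_mul ℂ, Unitization.inr_star, hdB, ← hw, ← hX]
    noncomm_ring
  rw [hcast]
  exact hclose
end

section
/- Let A be a C*-algebra, let a ∈ A₊, and let b be a positive element of the closed two-sided ideal generated by a. Then for every ε > 0 there exist a positive integer n and elements x₁, …, xₙ ∈ A such that ‖b - Σₖ xₖ* a xₖ‖ < ε. -/
open scoped CStarAlgebra

set_option linter.unusedSectionVars false

section Aux

variable {A : Type*} [NonUnitalCStarAlgebra A] [PartialOrder A] [StarOrderedRing A]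


variable {A : Type*} [NonUnitalCStarAlgebra A] [PartialOrder A] [StarOrderedRing A]

lemma key1 (a : A) (ha : 0 ≤ a) (r : A) :
    a * r + star r * a ≤ a + star r * a * r := by
  set s := CFC.sqrt a with hs_def
  have hs : s * s = a := CFC.sqrt_mul_sqrt_self a ha
  have hs' : star s = s := (IsSelfAdjoint.of_nonneg (CFC.sqrt_nonneg _)).star_eq
  have expand : star (s - s * r) * (s - s * r)
      = (s * s + star r * (s * s) * r) - ((s * s) * r + star r * (s * s)) := by
    rw [star_sub, star_mul, hs']
    noncomm_ring
  rw [← sub_nonneg, ← hs]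
  calc (0 : A) ≤ star (s - s * r) * (s - s * r) := star_mul_self_nonneg _
    _ = _ := by rw [expand]

lemma key2 (a : A) (ha : 0 ≤ a) (u v : A) :
    u * a * v + star v * a * star u ≤ u * a * star u + star v * a * v := by
  set s := CFC.sqrt a with hs_def
  have hs : s * s = a := CFC.sqrt_mul_sqrt_self a ha
  have hs' : star s = s := (IsSelfAdjoint.of_nonneg (CFC.sqrt_nonneg _)).star_eq
  have expand : (u * s - star v * s) * star (u * s - star v * s)
      = (u * (s * s) * star u + star v * (s * s) * v)
        - (u * (s * s) * v + star v * (s * s) * star u) := by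
    rw [star_sub, star_mul, star_mul, hs', star_star]
    noncomm_ring
  rw [← sub_nonneg, ← hs]
  calc (0 : A) ≤ (u * s - star v * s) * star (u * s - star v * s) := mul_star_self_nonneg _
    _ = _ := by rw [expand]

/-- The set of "conjugate sums" generators. -/
def conjGen (a : A) : Set A := {a} ∪ Set.range (fun x : A => star x * a * x)

lemma conjGen_nonneg {a : A} (ha : 0 ≤ a) : ∀ P ∈ AddSubmonoid.closure (conjGen a), 0 ≤ P := by
  intro P hP
  induction hP using AddSubmonoid.closure_induction with
  | mem x hx =>
    rcases hx with rfl | ⟨y, rfl⟩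
    · exact ha
    · exact star_left_conjugate_nonneg ha y
  | zero => exact le_refl 0
  | add x y _ _ hx hy => exact add_nonneg hx hy

lemma conjGen_conj {a : A} (P : A) (hP : P ∈ AddSubmonoid.closure (conjGen a)) (y : A) :
    ∃ L : List A, star y * P * y = (L.map (fun x => star x * a * x)).sum := by
  induction hP using AddSubmonoid.closure_induction with
  | mem x hx =>
    rcases hx with rfl | ⟨z, rfl⟩
    · exact ⟨[y], by simp⟩
    · exact ⟨[z * y], by simp [star_mul, mul_assoc]⟩
  | zero => exact ⟨[], by simp⟩
  | add x z _ _ hx hz =>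
    obtain ⟨L₁, h₁⟩ := hx
    obtain ⟨L₂, h₂⟩ := hz
    exact ⟨L₁ ++ L₂, by rw [List.map_append, List.sum_append, ← h₁, ← h₂]; noncomm_ring⟩

open Pointwise Set in
lemma span_le_conjGen {a : A} (ha : 0 ≤ a) (d : A)
    (hd : d ∈ (TwoSidedIdeal.span {a} : TwoSidedIdeal A)) :
    ∃ P ∈ AddSubmonoid.closure (conjGen a),
      d + star d ≤ P ∧ -(d + star d) ≤ P := by
  have ha' : star a = a := (IsSelfAdjoint.of_nonneg ha).star_eq
  have hmemA : a ∈ conjGen a := Or.inl rfl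
  have hmemC : ∀ x : A, star x * a * x ∈ conjGen a := fun x => Or.inr ⟨x, rfl⟩
  rw [TwoSidedIdeal.mem_span_iff_mem_addSubgroup_closure_nonunital] at hd
  induction hd using AddSubgroup.closure_induction with
  | mem x hx =>
    rcases hx with ((hx | ⟨y, hy, r, -, rfl⟩) | ⟨r, -, y, hy, rfl⟩) |
        ⟨-, ⟨r', -, y, hy, rfl⟩, r, -, rfl⟩
    · -- x = a
      rcases hx with rfl
      refine ⟨x + x, add_mem (AddSubmonoid.subset_closure hmemA)
        (AddSubmonoid.subset_closure hmemA), ?_, ?_⟩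
      · rw [ha']
      · rw [ha']
        exact le_trans (neg_nonpos_of_nonneg (add_nonneg ha ha)) (add_nonneg ha ha)
    · -- x = a * r
      rcases hy with rfl
      refine ⟨y + star r * y * r, add_mem (AddSubmonoid.subset_closure hmemA)
        (AddSubmonoid.subset_closure (hmemC r)), ?_, ?_⟩
      · rw [star_mul, ha']
        exact key1 y ha r
      · have h := key1 y ha (-r)
        simp only [mul_neg, star_neg, neg_mul, neg_neg] at h
        rw [star_mul, ha', neg_add]
        exact h
    · -- x = r * a
      rcases hy with rfl
      refine ⟨y + star (star r) * y * star r, add_mem (AddSubmonoid.subset_closure hmemA)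
        (AddSubmonoid.subset_closure (hmemC (star r))), ?_, ?_⟩
      · have h := key1 y ha (star r)
        rw [star_star] at h
        rw [star_mul, ha', star_star, add_comm (r * y) (y * star r)]
        exact h
      · have h := key1 y ha (-(star r))
        simp only [mul_neg, star_neg, neg_mul, neg_neg, star_star] at h
        rw [star_mul, ha', star_star, neg_add, add_comm (-(r * y)) (-(y * star r))]
        exact h
    · -- x = (r' * a) * r
      rcases hy with rfl
      refine ⟨star (star r') * y * star r' + star r * y * r,
        add_mem (AddSubmonoid.subset_closure (hmemC (star r')))
          (AddSubmonoid.subset_closure (hmemC r)), ?_, ?_⟩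
      · have h := key2 y ha r' r
        rw [star_mul, star_mul, ha', ← mul_assoc, star_star]
        exact h
      · have h := key2 y ha r' (-r)
        simp only [mul_neg, star_neg, neg_mul, neg_neg] at h
        rw [star_mul, star_mul, ha', ← mul_assoc, star_star, neg_add]
        exact h
  | zero =>
    exact ⟨0, zero_mem _, by simp, by simp⟩
  | add x z _ _ hx hz =>
    obtain ⟨P₁, hP₁, h₁, h₁'⟩ := hx
    obtain ⟨P₂, hP₂, h₂, h₂'⟩ := hz
    refine ⟨P₁ + P₂, add_mem hP₁ hP₂, ?_, ?_⟩
    · rw [star_add]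
      exact le_of_eq_of_le (by abel) (add_le_add h₁ h₂)
    · rw [star_add]
      exact le_of_eq_of_le (by abel) (add_le_add h₁' h₂')
  | neg x _ hx =>
    obtain ⟨P, hP, h₁, h₂⟩ := hx
    refine ⟨P, hP, ?_, ?_⟩
    · rw [star_neg]
      exact le_of_eq_of_le (by abel) h₂
    · rw [star_neg]
      exact le_of_eq_of_le (by abel) h₁

lemma algMap_nonneg {B : Type*} [CStarAlgebra B] [PartialOrder B] [StarOrderedRing B]
    {r : ℝ} (hr : 0 ≤ r) : 0 ≤ algebraMap ℝ B r := by
  have h1 : star (algebraMap ℝ B (Real.sqrt r)) = algebraMap ℝ B (Real.sqrt r) :=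
    (IsSelfAdjoint.algebraMap B (star_trivial _)).star_eq
  calc (0 : B) ≤ star (algebraMap ℝ B (Real.sqrt r)) * algebraMap ℝ B (Real.sqrt r) :=
      star_mul_self_nonneg _
    _ = algebraMap ℝ B (Real.sqrt r * Real.sqrt r) := by rw [h1, ← map_mul]
    _ = algebraMap ℝ B r := by rw [Real.mul_self_sqrt hr]

lemma list_sum_get {α M : Type*} [AddCommMonoid M] (g : α → M) (l : List α) :
    ∑ k : Fin l.length, g (l.get k) = (l.map g).sum := by
  induction l with
  | nil => simp
  | cons hd tl ih =>
    rw [List.map_cons, List.sum_cons, ← ih]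
    exact Fin.sum_univ_succ fun i : Fin (tl.length + 1) => g ((hd :: tl).get i)

end Aux

/-- Lemma 1.13: if `b ≥ 0` lies in the closed two-sided ideal generated by `a ≥ 0`, then
for every `ε > 0` there are `n` and `x₁, …, xₙ ∈ A` with `‖b - Σ xₖ* a xₖ‖ < ε`. -/
theorem approx_by_conjugates_of_mem_closedIdeal {A : Type*} [NonUnitalCStarAlgebra A]
    [PartialOrder A] [StarOrderedRing A]
    (a b : A) (ha : 0 ≤ a) (hb : 0 ≤ b)
    (hmem : b ∈ closure ((TwoSidedIdeal.span {a} : TwoSidedIdeal A) : Set A)) :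
    ∀ ε > (0 : ℝ), ∃ (n : ℕ) (x : Fin n → A), ‖b - ∑ k, star (x k) * a * x k‖ < ε := by
  intro ε hε
  have hδ : (0 : ℝ) < ε / 2 := by positivity
  obtain ⟨d, hdI, hdist⟩ := Metric.mem_closure_iff.mp hmem (ε / 2) hδ
  rw [dist_eq_norm] at hdist
  obtain ⟨P, hPT, hle, -⟩ := span_le_conjGen ha d hdI
  have hb' : star b = b := (IsSelfAdjoint.of_nonneg hb).star_eq
  have hP0 : 0 ≤ P := conjGen_nonneg ha P hPT
  have hbb : (0 : A) ≤ b + b := add_nonneg hb hb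
  have hds_sa : IsSelfAdjoint (d + star d) := by
    rw [isSelfAdjoint_iff, star_add, star_star]; exact add_comm _ _
  set w : A := (b + b) - (d + star d) with hw
  have hw_sa : IsSelfAdjoint w :=
    ((IsSelfAdjoint.of_nonneg hb).add (IsSelfAdjoint.of_nonneg hb)).sub hds_sa
  have hw_norm : ‖w‖ ≤ ε := by
    have hweq : w = (b - d) + star (b - d) := by rw [hw, star_sub, hb']; abel
    calc ‖w‖ = ‖(b - d) + star (b - d)‖ := by rw [hweq]
      _ ≤ ‖b - d‖ + ‖star (b - d)‖ := norm_add_le _ _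
      _ = ‖b - d‖ + ‖b - d‖ := by rw [norm_star]
      _ ≤ ε / 2 + ε / 2 := add_le_add hdist.le hdist.le
      _ = ε := by ring
  -- pass to the unitization
  set e : A⁺¹ := (P : A⁺¹) + algebraMap ℝ A⁺¹ ε with he
  have hPB : (0 : A⁺¹) ≤ (P : A⁺¹) := Unitization.inr_nonneg_iff.mpr hP0
  have hwB : (w : A⁺¹) ≤ algebraMap ℝ A⁺¹ ε := by
    refine le_trans (IsSelfAdjoint.le_algebraMap_norm_self
      ((Unitization.isSelfAdjoint_inr (R := ℂ)).mpr hw_sa)) ?_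
    rw [← sub_nonneg, ← map_sub]
    refine algMap_nonneg ?_
    rw [sub_nonneg, Unitization.norm_inr]
    exact hw_norm
  have h2b : ((b + b : A) : A⁺¹) ≤ e := by
    have hsplit : ((b + b : A) : A⁺¹) = ((d + star d : A) : A⁺¹) + (w : A⁺¹) := by
      rw [← Unitization.inr_add]
      congr 1
      rw [hw]; abel
    rw [hsplit, he]
    exact add_le_add ((Unitization.inr_le_iff _ _ hds_sa (IsSelfAdjoint.of_nonneg hP0)).mpr hle)
      hwB
  have he0 : (0 : A⁺¹) ≤ e := add_nonneg hPB (algMap_nonneg hε.le)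
  have he_unit : IsUnit e := by
    refine CStarAlgebra.isUnit_of_le (algebraMap ℝ A⁺¹ ε) ?_ (IsUnit.isStrictlyPositive ?_ (algMap_nonneg hε.le))
    · rw [he]; exact le_add_of_nonneg_left hPB
    · exact (isUnit_iff_ne_zero.mpr hε.ne').map (algebraMap ℝ A⁺¹)
  set g : A⁺¹ := e ^ (-(1 / 2) : ℝ) with hg
  have hg0 : (0 : A⁺¹) ≤ g := CFC.rpow_nonneg
  have hg_sa : star g = g := (IsSelfAdjoint.of_nonneg hg0).star_eq
  have hgeg : g * e * g = 1 := CFC.conjugate_rpow_neg_one_half e (IsUnit.isStrictlyPositive he_unit he0)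
  set s : A := CFC.sqrt (b + b) with hsdef
  have hs : s * s = b + b := CFC.sqrt_mul_sqrt_self _ hbb
  have hs_sa : star s = s := (IsSelfAdjoint.of_nonneg (CFC.sqrt_nonneg _)).star_eq
  set y : A⁺¹ := g * (s : A⁺¹) with hy
  set yA : A := g.fst • s + g.snd * s with hyAdef
  have hyA : ((yA : A) : A⁺¹) = y := by
    rw [hyAdef, Unitization.inr_add, Unitization.inr_mul,
      ← Unitization.inl_mul_inr, ← add_mul, Unitization.inl_fst_add_inr_snd_eq, hy]
  have hyst : star y = (s : A⁺¹) * g := by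
    rw [hy, star_mul, ← Unitization.inr_star, hs_sa, hg_sa]
  have hkeyid : star y * e * y = ((b + b : A) : A⁺¹) := by
    rw [hyst, hy]
    calc (s : A⁺¹) * g * e * (g * (s : A⁺¹)) = (s : A⁺¹) * (g * e * g) * (s : A⁺¹) := by
          noncomm_ring
      _ = (s : A⁺¹) * 1 * (s : A⁺¹) := by rw [hgeg]
      _ = ((b + b : A) : A⁺¹) := by rw [mul_one, ← Unitization.inr_mul, hs]
  have hyy_norm : ‖star y * y‖ ≤ 1 := by
    have h1 : y * star y = g * ((b + b : A) : A⁺¹) * g := by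
      rw [hyst, hy]
      calc g * (s : A⁺¹) * ((s : A⁺¹) * g) = g * ((s : A⁺¹) * (s : A⁺¹)) * g := by noncomm_ring
        _ = g * ((b + b : A) : A⁺¹) * g := by rw [← Unitization.inr_mul, hs]
    have h2 : (0 : A⁺¹) ≤ g * ((b + b : A) : A⁺¹) * g := by
      have := star_left_conjugate_nonneg (Unitization.inr_nonneg_iff.mpr hbb) g
      rwa [hg_sa] at this
    have h3 : g * ((b + b : A) : A⁺¹) * g ≤ 1 := by
      have := star_left_conjugate_le_conjugate h2b g
      rw [hg_sa] at this
      exact this.trans_eq hgeg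
    have h4 : ‖y * star y‖ ≤ 1 := by
      rw [h1]
      calc ‖g * ((b + b : A) : A⁺¹) * g‖ ≤ ‖(1 : A⁺¹)‖ :=
            CStarAlgebra.norm_le_norm_of_nonneg_of_le h2 h3
        _ = 1 := norm_one
    calc ‖star y * y‖ = ‖y‖ * ‖y‖ := CStarRing.norm_star_mul_self
      _ = ‖y * star y‖ := CStarRing.norm_self_mul_star.symm
      _ ≤ 1 := h4
  have hkey : ((b + b : A) : A⁺¹) - star y * (P : A⁺¹) * y = ε • (star y * y) := by
    have h5 : star y * e * y = star y * (P : A⁺¹) * y + ε • (star y * y) := by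
      rw [he, mul_add, add_mul, Algebra.algebraMap_eq_smul_one, mul_smul_comm, mul_one,
        smul_mul_assoc]
    rw [← hkeyid, h5]
    abel
  -- representation of the conjugated P as a sum of conjugates of a
  obtain ⟨L, hL⟩ := conjGen_conj P hPT yA
  have hrep : star y * (P : A⁺¹) * y = ((star yA * P * yA : A) : A⁺¹) := by
    rw [Unitization.inr_mul, Unitization.inr_mul, Unitization.inr_star, hyA]
  have hnormA : ‖(b + b) - star yA * P * yA‖ ≤ ε := by
    have hcast : (((b + b) - star yA * P * yA : A) : A⁺¹)
        = ((b + b : A) : A⁺¹) - star y * (P : A⁺¹) * y := by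
      rw [Unitization.inr_sub ℂ, hrep]
    rw [← Unitization.norm_inr (𝕜 := ℂ) ((b + b) - star yA * P * yA), hcast, hkey, norm_smul,
      Real.norm_eq_abs, abs_of_pos hε]
    exact mul_le_of_le_one_right hε.le hyy_norm
  -- assemble the final family
  refine ⟨L.length, fun k => (Real.sqrt 2)⁻¹ • L.get k, ?_⟩
  have hterm : ∀ v : A, star ((Real.sqrt 2)⁻¹ • v) * a * ((Real.sqrt 2)⁻¹ • v)
      = (2⁻¹ : ℝ) • (star v * a * v) := by
    intro v
    rw [star_smul, star_trivial, smul_mul_assoc, smul_mul_assoc, mul_smul_comm, smul_smul]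
    congr 1
    rw [← mul_inv, Real.mul_self_sqrt (by norm_num)]
  have hsum : ∑ k, star ((Real.sqrt 2)⁻¹ • L.get k) * a * ((Real.sqrt 2)⁻¹ • L.get k)
      = (2⁻¹ : ℝ) • (star yA * P * yA) := by
    calc ∑ k, star ((Real.sqrt 2)⁻¹ • L.get k) * a * ((Real.sqrt 2)⁻¹ • L.get k)
        = ∑ k, (2⁻¹ : ℝ) • (star (L.get k) * a * L.get k) := by
          exact Finset.sum_congr rfl fun k _ => hterm (L.get k)
      _ = (2⁻¹ : ℝ) • ∑ k, star (L.get k) * a * L.get k := (Finset.smul_sum).symm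
      _ = (2⁻¹ : ℝ) • (star yA * P * yA) := by
          rw [list_sum_get (fun v => star v * a * v) L, ← hL]
  rw [hsum]
  have hfinal : b - (2⁻¹ : ℝ) • (star yA * P * yA)
      = (2⁻¹ : ℝ) • ((b + b) - star yA * P * yA) := by
    rw [smul_sub]
    congr 1
    rw [← two_smul ℝ b, smul_smul]
    norm_num
  rw [hfinal, norm_smul, Real.norm_eq_abs, abs_of_pos (by norm_num : (0:ℝ) < 2⁻¹)]
  nlinarith [hnormA, norm_nonneg ((b + b) - star yA * P * yA)]
end

section
/- Let A be a simple unital C*-algebra and let x ∈ A₊ be nonzero. Then there exist a positive integer n and elements b₁, …, bₙ ∈ A such that Σⱼ bⱼ x bⱼ* = 1. -/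
/-- Corollary 1.14: in a simple unital C*-algebra, for every nonzero positive `x`
there are `b₁, …, bₙ` with `Σ bⱼ x bⱼ* = 1`. -/
theorem exists_conjugates_sum_eq_one {A : Type*} [CStarAlgebra A]
    [PartialOrder A] [StarOrderedRing A]
    (hsimple : ∀ I : TwoSidedIdeal A, IsClosed (I : Set A) → I = ⊥ ∨ I = ⊤)
    (x : A) (hx : 0 ≤ x) (hx0 : x ≠ 0) :
    ∃ (n : ℕ) (b : Fin n → A), 0 < n ∧ ∑ j, b j * x * star (b j) = 1 := by
  classical
  have hnt : Nontrivial A := nontrivial_of_ne x 0 hx0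
  have hxsa : star x = x := (IsSelfAdjoint.of_nonneg hx)
  -- the algebraic two-sided ideal generated by `x`, as a set
  set S : Set A := {z | ∃ (n : ℕ) (a c : Fin n → A), z = ∑ j, a j * x * c j} with hS
  have hzeroS : (0 : A) ∈ S := ⟨0, ![], ![], by simp⟩
  have haddS : ∀ {u v : A}, u ∈ S → v ∈ S → u + v ∈ S := by
    rintro u v ⟨n, a, c, rfl⟩ ⟨m, a', c', rfl⟩
    refine ⟨n + m, Fin.append a a', Fin.append c c', ?_⟩
    rw [Fin.sum_univ_add]
    simp [Fin.append_left, Fin.append_right]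
  have hnegS : ∀ {u : A}, u ∈ S → -u ∈ S := by
    rintro u ⟨n, a, c, rfl⟩
    exact ⟨n, fun j => -a j, c, by simp [Finset.sum_neg_distrib]⟩
  have hleftS : ∀ {r u : A}, u ∈ S → r * u ∈ S := by
    rintro r u ⟨n, a, c, rfl⟩
    refine ⟨n, fun j => r * a j, c, ?_⟩
    rw [Finset.mul_sum]
    simp [mul_assoc]
  have hrightS : ∀ {u r : A}, u ∈ S → u * r ∈ S := by
    rintro u r ⟨n, a, c, rfl⟩
    refine ⟨n, a, fun j => c j * r, ?_⟩
    rw [Finset.sum_mul]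
    simp [mul_assoc]
  -- its closure is a closed two-sided ideal
  set I : TwoSidedIdeal A := TwoSidedIdeal.mk' (closure S)
    (subset_closure hzeroS)
    (fun hu hv => map_mem_closure₂ continuous_add hu hv fun _ ha _ hb => haddS ha hb)
    (fun hu => map_mem_closure continuous_neg hu fun _ ha => hnegS ha)
    (fun {r u} hu => map_mem_closure (continuous_mul_left r) hu fun _ ha => hleftS ha)
    (fun {u r} hu => map_mem_closure (f := (· * r)) (continuous_mul_right r) hu
      fun _ ha => hrightS ha)
    with hI
  have hIclosed : IsClosed (I : Set A) := by
    rw [hI, TwoSidedIdeal.coe_mk']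
    exact isClosed_closure
  have hxI : x ∈ I := by
    rw [hI, TwoSidedIdeal.mem_mk']
    exact subset_closure ⟨1, fun _ => 1, fun _ => 1, by simp⟩
  have hItop : I = ⊤ := by
    rcases hsimple I hIclosed with h | h
    · rw [h] at hxI; exact absurd (by simpa using hxI) hx0
    · exact h
  have hone : (1 : A) ∈ closure S := by
    have : (1 : A) ∈ I := by rw [hItop]; trivial
    rwa [hI, TwoSidedIdeal.mem_mk'] at this
  -- pick `y` in the algebraic ideal with `‖1 - y‖ < 1`
  obtain ⟨y, hyS, hy⟩ := Metric.mem_closure_iff.mp hone 1 one_pos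
  rw [dist_eq_norm] at hy
  obtain ⟨n, a, c, rfl⟩ := hyS
  set y : A := ∑ j, a j * x * c j with hy_def
  set d : Fin n → A := fun j => a j + star (c j) with hd
  set e : Fin n → A := fun j => a j - star (c j) with he
  set p : A := ∑ j, d j * x * star (d j) with hp
  set q : A := ∑ j, e j * x * star (e j) with hq
  set w : A := y + star y with hw
  have hstar_y : star y = ∑ j, star (c j) * x * star (a j) := by
    rw [hy_def, star_sum]
    simp [mul_assoc, hxsa]
  -- key algebraic identity
  have key : ∀ j, d j * x * star (d j) = e j * x * star (e j) +
      ((a j * x * c j + star (c j) * x * star (a j)) +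
       (a j * x * c j + star (c j) * x * star (a j))) := by
    intro j
    simp only [hd, he, star_add, star_sub, star_star]
    noncomm_ring
  have hpq : p = q + (w + w) := by
    have hw' : w = ∑ j, (a j * x * c j + star (c j) * x * star (a j)) := by
      rw [hw, hy_def, hstar_y, ← Finset.sum_add_distrib]
    calc p = ∑ j, (e j * x * star (e j) +
        ((a j * x * c j + star (c j) * x * star (a j)) +
         (a j * x * c j + star (c j) * x * star (a j)))) :=
          Finset.sum_congr rfl fun j _ => key j
      _ = q + (w + w) := by
          rw [Finset.sum_add_distrib, Finset.sum_add_distrib, hw', hq]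
  have hq_nonneg : (0 : A) ≤ q :=
    Finset.sum_nonneg fun j _ => star_right_conjugate_nonneg hx (e j)
  have hp_nonneg : (0 : A) ≤ p :=
    Finset.sum_nonneg fun j _ => star_right_conjugate_nonneg hx (d j)
  have hw_sa : IsSelfAdjoint w := by
    rw [hw]
    simp only [IsSelfAdjoint, star_add, star_star]
    exact add_comm _ _
  -- spectral lower bound for `w`
  have h2w : algebraMap ℝ A 2 - w = (1 - y) + star (1 - y) := by
    rw [hw]
    simp only [star_sub, star_one]
    rw [map_ofNat, ← one_add_one_eq_two]
    abel
  have h2w_norm : ‖algebraMap ℝ A 2 - w‖ < 2 := by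
    rw [h2w]
    calc ‖(1 - y) + star (1 - y)‖ ≤ ‖1 - y‖ + ‖star (1 - y)‖ := norm_add_le _ _
      _ = ‖1 - y‖ + ‖1 - y‖ := by rw [norm_star]
      _ < 1 + 1 := by linarith
      _ = 2 := by norm_num
  set ε : ℝ := 2 - ‖algebraMap ℝ A 2 - w‖ with hε_def
  have hε : 0 < ε := by simp only [hε_def]; linarith
  have hspec : ∀ r ∈ spectrum ℝ w, ε ≤ r := by
    intro r hr
    have hmem : (2 : ℝ) - r ∈ spectrum ℝ (algebraMap ℝ A 2 - w) := by
      rw [← spectrum.singleton_sub_eq]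
      exact Set.sub_mem_sub rfl hr
    have := spectrum.norm_le_norm_of_mem hmem
    have habs : |2 - r| ≤ 2 - ε := by
      rw [hε_def]; simpa [Real.norm_eq_abs] using this
    have := (abs_le.mp habs).2
    linarith
  have hεw : algebraMap ℝ A ε ≤ w := algebraMap_le_of_le_spectrum hspec hw_sa
  have hεp : algebraMap ℝ A (ε + ε) ≤ p := by
    calc algebraMap ℝ A (ε + ε) = algebraMap ℝ A ε + algebraMap ℝ A ε := map_add _ _ _
      _ ≤ w + w := add_le_add hεw hεw
      _ ≤ q + (w + w) := le_add_of_nonneg_left hq_nonneg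
      _ = p := hpq.symm
  have hp_sa : IsSelfAdjoint p := IsSelfAdjoint.of_nonneg hp_nonneg
  have hp_unit : IsUnit p := by
    rw [← spectrum.zero_notMem_iff ℝ]
    intro h0
    have := (algebraMap_le_iff_le_spectrum hp_sa).mp hεp 0 h0
    linarith
  -- take the inverse square root
  set u : A := CFC.sqrt p with hu_def
  have hu2 : u * u = p := CFC.sqrt_mul_sqrt_self p hp_nonneg
  have hu_nonneg : (0 : A) ≤ u := CFC.sqrt_nonneg p
  have hu_sa : star u = u := IsSelfAdjoint.of_nonneg hu_nonneg
  obtain ⟨P, hP⟩ := hp_unit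
  have hcomm : Commute u ↑P⁻¹ := by
    refine Commute.units_inv_right ?_
    show u * ↑P = ↑P * u
    rw [hP, ← hu2, mul_assoc]
  set s : A := u * ↑P⁻¹ with hs_def
  have hus : u * s = 1 := by
    rw [hs_def, ← mul_assoc, hu2, ← hP, P.mul_inv]
  have hsu : s * u = 1 := by
    rw [hs_def, mul_assoc, ← hcomm.eq, ← mul_assoc, hu2, ← hP, P.mul_inv]
  have hs_star : star s = s := by
    have h1 : star s * u = 1 := by
      rw [← hu_sa, ← star_mul, hus, star_one]
    calc star s = star s * (u * s) := by rw [hus, mul_one]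
      _ = (star s * u) * s := by rw [mul_assoc]
      _ = s := by rw [h1, one_mul]
  have hsps : s * p * s = 1 := by
    calc s * p * s = (s * u) * (u * s) := by rw [← hu2]; noncomm_ring
      _ = 1 := by rw [hsu, hus, one_mul]
  -- assemble the answer
  refine ⟨n + 1, Fin.cons 0 (fun j => s * d j), Nat.succ_pos n, ?_⟩
  rw [Fin.sum_univ_succ]
  simp only [Fin.cons_zero, Fin.cons_succ, zero_mul, mul_zero, star_zero, zero_add]
  have : ∀ j : Fin n, (s * d j) * x * star (s * d j) = s * (d j * x * star (d j)) * s := by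
    intro j
    rw [star_mul, hs_star]
    noncomm_ring
  rw [Finset.sum_congr rfl fun j _ => this j]
  rw [← Finset.sum_mul, ← Finset.mul_sum, ← hp, hsps]
end

section
/- Let A be a C*-algebra, let x ∈ A₊ with ‖x‖ = 1, and let ε > 0. Then there exist positive elements a, b in the hereditary subalgebra closure(x A x) with ‖a‖ = ‖b‖ = 1, a b = b, and such that whenever c ∈ closure(b A b) satisfies ‖c‖ ≤ 1, then ‖x c - c‖ < ε. -/
section Clamp

/-- A continuous ramp function: `0` for `t ≤ c`, `1` for `t ≥ c + δ`, linear in between. -/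
noncomputable def clampFn (c δ t : ℝ) : ℝ := max 0 (min 1 ((t - c) / δ))

lemma clampFn_continuous (c δ : ℝ) : Continuous (clampFn c δ) := by
  unfold clampFn; fun_prop

lemma clampFn_nonneg (c δ t : ℝ) : 0 ≤ clampFn c δ t := le_max_left _ _

lemma clampFn_le_one (c δ t : ℝ) : clampFn c δ t ≤ 1 := by
  unfold clampFn
  rcases le_total ((t - c) / δ) 1 with h | h
  · exact max_le (by norm_num) (min_le_left _ _)
  · simp [min_eq_left h]

lemma clampFn_eq_zero {c δ t : ℝ} (h : t ≤ c) (hδ : 0 < δ) : clampFn c δ t = 0 := by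
  have h1 : (t - c) / δ ≤ 0 := div_nonpos_iff.mpr (Or.inr ⟨by linarith, hδ.le⟩)
  unfold clampFn
  exact max_eq_left ((min_le_right _ _).trans h1)

lemma clampFn_eq_one {c δ t : ℝ} (h : c + δ ≤ t) (hδ : 0 < δ) : clampFn c δ t = 1 := by
  have h1 : 1 ≤ (t - c) / δ := (one_le_div hδ).mpr (by linarith)
  unfold clampFn
  rw [min_eq_left h1, max_eq_right zero_le_one]

lemma clampFn_pos_imp {c δ t : ℝ} (h : clampFn c δ t ≠ 0) (hδ : 0 < δ) : c < t := by
  by_contra hct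
  exact h (clampFn_eq_zero (not_lt.mp hct) hδ)

end Clamp

/-- Lemma 2.8: given `x ≥ 0` with `‖x‖ = 1` and `ε > 0`, there are positive `a, b` in the
hereditary subalgebra `closure (x A x)` with `‖a‖ = ‖b‖ = 1`, `a b = b`, and such that
every `c ∈ closure (b A b)` with `‖c‖ ≤ 1` satisfies `‖x c - c‖ < ε`. -/
theorem exists_pair_in_hereditary {A : Type*} [NonUnitalCStarAlgebra A]
    [PartialOrder A] [StarOrderedRing A]
    (x : A) (hx : 0 ≤ x) (hxn : ‖x‖ = 1) (ε : ℝ) (hε : 0 < ε) :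
    ∃ a b : A, 0 ≤ a ∧ 0 ≤ b ∧
      a ∈ closure {y : A | ∃ d, y = x * d * x} ∧
      b ∈ closure {y : A | ∃ d, y = x * d * x} ∧
      ‖a‖ = 1 ∧ ‖b‖ = 1 ∧ a * b = b ∧
      ∀ c ∈ closure {y : A | ∃ d, y = b * d * b}, ‖c‖ ≤ 1 → ‖x * c - c‖ < ε := by
  have hsa : IsSelfAdjoint x := .of_nonneg hx
  set δ : ℝ := min (ε / 3) (1 / 3) with hδdef
  have hδ0 : 0 < δ := lt_min (by linarith) (by norm_num)
  have hδ3 : δ ≤ 1 / 3 := min_le_right _ _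
  have hδε : δ ≤ ε / 3 := min_le_left _ _
  -- the two ramp functions
  set f : ℝ → ℝ := clampFn (1 - 2 * δ) δ with hfdef
  set g : ℝ → ℝ := clampFn (1 - δ) δ with hgdef
  have hfc : Continuous f := clampFn_continuous _ _
  have hgc : Continuous g := clampFn_continuous _ _
  have hf0 : f 0 = 0 := clampFn_eq_zero (by linarith) hδ0
  have hg0 : g 0 = 0 := clampFn_eq_zero (by linarith) hδ0
  have hf1 : f 1 = 1 := clampFn_eq_one (by linarith) hδ0
  have hg1 : g 1 = 1 := clampFn_eq_one (by linarith) hδ0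
  -- quasispectrum facts
  have hspec : ∀ t ∈ quasispectrum ℝ x, 0 ≤ t ∧ t ≤ 1 := by
    intro t ht
    refine ⟨quasispectrum_nonneg_of_nonneg x hx t ht, ?_⟩
    have := norm_apply_le_norm_cfcₙ (id : ℝ → ℝ) x ht continuousOn_id rfl hsa
    rw [cfcₙ_id ℝ x, hxn] at this
    calc t ≤ |t| := le_abs_self t
    _ ≤ 1 := this
  have hone : (1 : ℝ) ∈ quasispectrum ℝ x := by
    obtain ⟨t, ht, htn⟩ := (IsGreatest.norm_cfcₙ (id : ℝ → ℝ) x continuousOn_id rfl hsa).1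
    rw [cfcₙ_id ℝ x, hxn] at htn
    have h0t := (hspec t ht).1
    have : t = 1 := by
      simp only [id_eq, Real.norm_eq_abs, abs_of_nonneg h0t] at htn
      exact htn
    rwa [this] at ht
  -- define a and b
  set a : A := cfcₙ f x with hadef
  set b : A := cfcₙ g x with hbdef
  have ha_nonneg : 0 ≤ a := cfcₙ_nonneg fun t _ => clampFn_nonneg _ _ t
  have hb_nonneg : 0 ≤ b := cfcₙ_nonneg fun t _ => clampFn_nonneg _ _ t
  -- membership in the hereditary subalgebra
  have hmem : ∀ (c' : ℝ) (F : ℝ → ℝ), F = clampFn c' δ → (1 : ℝ)/3 ≤ c' →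
      cfcₙ F x ∈ {y : A | ∃ d, y = x * d * x} := by
    intro c' F hF hc'
    subst hF
    set F := clampFn c' δ with hF
    have hc'0 : 0 < c' := by linarith
    have hFc : Continuous F := clampFn_continuous _ _
    have hF0 : F 0 = 0 := clampFn_eq_zero (by linarith) hδ0
    set h : ℝ → ℝ := fun t => F t / max (t ^ 2) (c' ^ 2) with hhdef
    have hden : ∀ t : ℝ, max (t ^ 2) (c' ^ 2) ≠ 0 := fun t =>
      ne_of_gt (lt_of_lt_of_le (by positivity) (le_max_right _ _))
    have hhc : Continuous h := hFc.div (by fun_prop) hden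
    have hh0 : h 0 = 0 := by simp [hhdef, hF0]
    have key : ∀ t : ℝ, t * h t * t = F t := by
      intro t
      by_cases hFt : F t = 0
      · simp [hhdef, hFt]
      · have hct : c' < t := clampFn_pos_imp hFt hδ0
        have ht2 : c' ^ 2 ≤ t ^ 2 := by nlinarith
        have ht0 : t ≠ 0 := (hc'0.trans hct).ne'
        rw [hhdef]
        simp only [max_eq_left ht2]
        field_simp
    refine ⟨cfcₙ h x, ?_⟩
    have e1 : cfcₙ F x = cfcₙ (fun t : ℝ => (t * h t) * t) x := by
      apply cfcₙ_congr
      intro t _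
      exact (key t).symm
    rw [e1, cfcₙ_mul (fun t : ℝ => t * h t) (fun t : ℝ => t) x
        (by fun_prop) (by simp [hh0]) (by fun_prop) rfl,
      cfcₙ_mul (fun t : ℝ => t) h x (by fun_prop) rfl hhc.continuousOn hh0,
      cfcₙ_id' ℝ x]
  have ha_mem : a ∈ closure {y : A | ∃ d, y = x * d * x} :=
    subset_closure (hmem (1 - 2 * δ) f hfdef (by linarith))
  have hb_mem : b ∈ closure {y : A | ∃ d, y = x * d * x} :=
    subset_closure (hmem (1 - δ) g hgdef (by linarith))
  -- norms
  have hnorm : ∀ (F : ℝ → ℝ), Continuous F → F 0 = 0 → F 1 = 1 →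
      (∀ t, 0 ≤ F t ∧ F t ≤ 1) → ‖cfcₙ F x‖ = 1 := by
    intro F hFc hF0 hF1 hFb
    refine le_antisymm (norm_cfcₙ_le fun t _ => ?_) ?_
    · rw [Real.norm_eq_abs, abs_of_nonneg (hFb t).1]; exact (hFb t).2
    · have := norm_apply_le_norm_cfcₙ F x hone hFc.continuousOn hF0 hsa
      rwa [hF1, norm_one] at this
  have ha_norm : ‖a‖ = 1 := hnorm f hfc hf0 hf1
    (fun t => ⟨clampFn_nonneg _ _ t, clampFn_le_one _ _ t⟩)
  have hb_norm : ‖b‖ = 1 := hnorm g hgc hg0 hg1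
    (fun t => ⟨clampFn_nonneg _ _ t, clampFn_le_one _ _ t⟩)
  -- a * b = b
  have hab : a * b = b := by
    rw [hadef, hbdef, ← cfcₙ_mul f g x hfc.continuousOn hf0 hgc.continuousOn hg0]
    apply cfcₙ_congr
    intro t _
    by_cases hgt : g t = 0
    · simp [hgt]
    · have h1 : 1 - δ < t := clampFn_pos_imp hgt hδ0
      show f t * g t = g t
      rw [hfdef, clampFn_eq_one (by linarith) hδ0, one_mul]
  -- the estimate
  refine ⟨a, b, ha_nonneg, hb_nonneg, ha_mem, hb_mem, ha_norm, hb_norm, hab, ?_⟩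
  intro c hc hcn
  -- a acts as a unit on the hereditary subalgebra of b
  have hac : a * c = c := by
    have hclosed : IsClosed {y : A | a * y = y} :=
      isClosed_eq (by fun_prop) continuous_id
    have hsub : {y : A | ∃ d, y = b * d * b} ⊆ {y : A | a * y = y} := by
      rintro y ⟨d, rfl⟩
      show a * (b * d * b) = b * d * b
      rw [← mul_assoc, ← mul_assoc, hab]
    exact (closure_minimal hsub hclosed) hc
  -- ‖x * a - a‖ ≤ 2δ
  have hxa : ‖x * a - a‖ ≤ 2 * δ := by
    have e1 : x * a - a = cfcₙ (fun t : ℝ => t * f t - f t) x := by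
      rw [cfcₙ_sub (fun t : ℝ => t * f t) f x
          (by fun_prop) (by simp [hf0]) hfc.continuousOn hf0,
        cfcₙ_mul (fun t : ℝ => t) f x (by fun_prop) rfl hfc.continuousOn hf0,
        cfcₙ_id' ℝ x]
    rw [e1]
    apply norm_cfcₙ_le
    intro t ht
    obtain ⟨ht0, ht1⟩ := hspec t ht
    rw [Real.norm_eq_abs]
    by_cases hft : f t = 0
    · simp [hft]; linarith
    · have h2 : 1 - 2 * δ < t := clampFn_pos_imp hft hδ0
      have hfb := clampFn_le_one (1 - 2*δ) δ t
      have hfnn := clampFn_nonneg (1 - 2*δ) δ t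
      have : t * f t - f t = (t - 1) * f t := by ring
      rw [this, abs_mul, abs_of_nonpos (by linarith : t - 1 ≤ 0),
        abs_of_nonneg hfnn]
      nlinarith
  calc ‖x * c - c‖ = ‖(x * a - a) * c‖ := by rw [sub_mul, mul_assoc, hac]
  _ ≤ ‖x * a - a‖ * ‖c‖ := norm_mul_le _ _
  _ ≤ (2 * δ) * 1 := mul_le_mul hxa hcn (norm_nonneg _) (by linarith)
  _ < ε := by linarith
end

section
/- Let X be a compact Hausdorff space, let G be a discrete group acting on X such that for every finite set S ⊂ G the set {x ∈ X : g·x ≠ x for all g ∈ S \ {1}} is dense in X. Let a = Σ_{g∈T} b_g u_g be an element of the algebraic crossed product C(X)[G] inside the reduced crossed product, and let ε > 0. Then there exists f ∈ C(X) with 0 ≤ f ≤ 1 such that f a* a f ∈ C(X) and ‖f a* a f‖ ≥ ‖E(a* a)‖ - ε, where E is the canonical conditional expectation onto C(X). -/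
open scoped ComplexOrder
open scoped Pointwise

/-- Lemma 6.7: Let a discrete group `G` act on a compact Hausdorff space `X` by
homeomorphisms such that for every finite `S ⊆ G` the set of points not fixed by any
nontrivial element of `S` is dense.  Model the reduced crossed product by a unital
C*-algebra `T` with an injective unital embedding `ι : C(X) → T`, covariant unitaries
`u g`, and the canonical conditional expectation `E`.  Then for every
`a = Σ_{g ∈ S} ι(b g) u g` in the algebraic crossed product and every `ε > 0` there is
`f ∈ C(X)` with `0 ≤ f ≤ 1`, `f a* a f ∈ C(X)`, and `‖f a* a f‖ ≥ ‖E(a* a)‖ - ε`. -/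
theorem exists_cutdown_in_CX {G X T : Type*} [Group G] [DecidableEq G]
    [TopologicalSpace X] [CompactSpace X] [T2Space X]
    [MulAction G X] [ContinuousConstSMul G X] [CStarAlgebra T]
    (hfree : ∀ S : Finset G, Dense {x : X | ∀ g ∈ S, g ≠ 1 → g • x ≠ x})
    (ι : C(X, ℂ) →⋆ₐ[ℂ] T) (hι : Function.Injective ι)
    (u : G →* unitary T)
    (hcov : ∀ (g : G) (f : C(X, ℂ)),
      (u g : T) * ι f * star (u g : T) = ι (f.comp ((Homeomorph.smul g⁻¹ : X ≃ₜ X) : C(X, X))))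
    (E : T →ₗ[ℂ] C(X, ℂ))
    (hE : ∀ (f : C(X, ℂ)) (g : G), E (ι f * (u g : T)) = if g = 1 then f else 0)
    (S : Finset G) (b : G → C(X, ℂ)) (a : T) (ha : a = ∑ g ∈ S, ι (b g) * (u g : T))
    (ε : ℝ) (hε : 0 < ε) :
    ∃ f : C(X, ℂ), 0 ≤ f ∧ f ≤ 1 ∧
      (∃ f₀ : C(X, ℂ), ι f * (star a * a) * ι f = ι f₀) ∧
      ‖E (star a * a)‖ - ε ≤ ‖ι f * (star a * a) * ι f‖ := by
  classical
  set α : G → C(X, ℂ) → C(X, ℂ) :=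
    fun g f => f.comp ((Homeomorph.smul g⁻¹ : X ≃ₜ X) : C(X, X)) with hαdef
  have hα_apply : ∀ (g : G) (f : C(X, ℂ)) (x : X), α g f x = f (g⁻¹ • x) := by
    intro g f x; rfl
  have lcov : ∀ (g : G) (f : C(X, ℂ)),
      (u g : T) * ι f = ι (α g f) * (u g : T) := by
    intro g f
    have h1 : (star (u g : T)) * (u g : T) = 1 := Unitary.coe_star_mul_self (u g)
    calc (u g : T) * ι f = (u g : T) * ι f * ((star (u g : T)) * (u g : T)) := by
          rw [h1, mul_one]
      _ = ((u g : T) * ι f * star (u g : T)) * (u g : T) := by simp only [mul_assoc]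
      _ = _ := by rw [hcov]
  have hstar : ∀ g : G, star (u g : T) = (u g⁻¹ : T) := by
    intro g
    rw [← Unitary.coe_star, Unitary.star_eq_inv, ← map_inv]
  have humul : ∀ g h : G, (u g : T) * (u h : T) = (u (g * h) : T) := by
    intro g h; rw [map_mul]; rfl
  have hu1 : (u 1 : T) = 1 := by rw [map_one]; rfl
  have hα1 : ∀ f : C(X, ℂ), α 1 f = f := by
    intro f; ext x
    rw [hα_apply]; simp
  set d : G → G → C(X, ℂ) := fun g g' => α g⁻¹ (star (b g) * b g') with hddef
  -- expansion of star a * a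
  have hterm : ∀ g g', star (ι (b g) * (u g : T)) * (ι (b g') * (u g' : T))
      = ι (d g g') * (u (g⁻¹ * g') : T) := by
    intro g g'
    rw [star_mul, hstar]
    calc (u g⁻¹ : T) * star (ι (b g)) * (ι (b g') * (u g' : T))
        = (u g⁻¹ : T) * (star (ι (b g)) * ι (b g')) * (u g' : T) := by
          simp only [mul_assoc]
      _ = (u g⁻¹ : T) * ι (star (b g) * b g') * (u g' : T) := by
          rw [← map_star, ← map_mul]
      _ = ι (d g g') * ((u g⁻¹ : T) * (u g' : T)) := by
          rw [lcov, mul_assoc]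
      _ = _ := by rw [humul]
  have hsa : star a * a = ∑ g ∈ S, ∑ g' ∈ S, ι (d g g') * (u (g⁻¹ * g') : T) := by
    rw [ha, star_sum, Finset.sum_mul_sum]
    exact Finset.sum_congr rfl fun g _ => Finset.sum_congr rfl fun g' _ => hterm g g'
  set c₁ : C(X, ℂ) := ∑ g ∈ S, d g g with hc₁def
  have hEA : E (star a * a) = c₁ := by
    rw [hsa, map_sum]
    refine Finset.sum_congr rfl fun g hg => ?_
    rw [map_sum]
    have : ∀ g' ∈ S, E (ι (d g g') * (u (g⁻¹ * g') : T))
        = if g = g' then d g g' else 0 := by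
      intro g' _
      rw [hE]
      simp only [inv_mul_eq_one]
    rw [Finset.sum_congr rfl this, Finset.sum_ite_eq S g (d g), if_pos hg]
  set Hset : Finset G := Finset.image₂ (fun g g' => g⁻¹ * g') S S with hHdef
  -- the cutdown computation
  have cutdown : ∀ f : C(X, ℂ), (∀ h ∈ Hset, h ≠ 1 → f * α h f = 0) →
      ι f * (star a * a) * ι f = ι (f * c₁ * f) := by
    intro f horth
    rw [hsa]
    simp only [Finset.mul_sum, Finset.sum_mul]
    have hterm2 : ∀ g ∈ S, ∀ g' ∈ S,
        ι f * (ι (d g g') * (u (g⁻¹ * g') : T)) * ι f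
        = if g = g' then ι (f * d g g * f) else 0 := by
      intro g hg g' hg'
      have : ι f * (ι (d g g') * (u (g⁻¹ * g') : T)) * ι f
          = ι (f * d g g' * α (g⁻¹ * g') f) * (u (g⁻¹ * g') : T) := by
        calc ι f * (ι (d g g') * (u (g⁻¹ * g') : T)) * ι f
            = (ι f * ι (d g g')) * ((u (g⁻¹ * g') : T) * ι f) := by
              simp only [mul_assoc]
          _ = (ι f * ι (d g g')) * (ι (α (g⁻¹ * g') f) * (u (g⁻¹ * g') : T)) := by
              rw [lcov, mul_assoc]
          _ = (ι f * ι (d g g') * ι (α (g⁻¹ * g') f)) * (u (g⁻¹ * g') : T) := by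
              simp only [mul_assoc]
          _ = _ := by rw [← map_mul, ← map_mul]
      rw [this]
      by_cases hgg : g = g'
      · subst hgg
        rw [if_pos rfl]
        simp [hα1]
      · rw [if_neg hgg]
        have hmem : g⁻¹ * g' ∈ Hset := Finset.mem_image₂_of_mem hg hg'
        have hne : g⁻¹ * g' ≠ 1 := by
          rw [Ne, inv_mul_eq_one]; exact hgg
        have : f * d g g' * α (g⁻¹ * g') f = 0 := by
          have h0 := horth _ hmem hne
          calc f * d g g' * α (g⁻¹ * g') f = d g g' * (f * α (g⁻¹ * g') f) := by ring
            _ = 0 := by rw [h0, mul_zero]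
        rw [this, map_zero, zero_mul]
    rw [Finset.sum_congr rfl fun g hg =>
      Finset.sum_congr rfl fun g' hg' => hterm2 g hg g' hg']
    have : ∀ g ∈ S, (∑ g' ∈ S, if g = g' then ι (f * d g g * f) else 0)
        = ι (f * d g g * f) := by
      intro g hg
      rw [Finset.sum_ite_eq S g (fun _ => ι (f * d g g * f)), if_pos hg]
    rw [Finset.sum_congr rfl this, ← map_sum]
    congr 1
    rw [hc₁def, Finset.mul_sum, Finset.sum_mul]
  -- main case split
  by_cases hsmall : ‖c₁‖ ≤ ε
  · refine ⟨0, le_refl 0, ?_, ⟨0, ?_⟩, ?_⟩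
    · intro x; show (0 : ℂ) ≤ (1 : ℂ); exact zero_le_one
    · simp
    · rw [hEA]; simp; linarith
  · push_neg at hsmall
    -- choose the point x₀
    have hVopen : IsOpen {x : X | ‖c₁‖ - ε < ‖c₁ x‖} := by
      have : Continuous fun x : X => ‖c₁ x‖ := c₁.continuous.norm
      exact isOpen_lt continuous_const this
    have hVne : {x : X | ‖c₁‖ - ε < ‖c₁ x‖}.Nonempty := by
      by_contra hcon
      rw [Set.not_nonempty_iff_eq_empty] at hcon
      have hle : ∀ x : X, ‖c₁ x‖ ≤ ‖c₁‖ - ε := by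
        intro x
        by_contra hx
        push_neg at hx
        exact absurd (Set.eq_empty_iff_forall_notMem.mp hcon x) (by simpa using hx)
      have : ‖c₁‖ ≤ ‖c₁‖ - ε :=
        (ContinuousMap.norm_le c₁ (by linarith)).mpr hle
      linarith
    obtain ⟨x₀, hx₀V, hx₀free⟩ :=
      (hfree Hset).inter_open_nonempty _ hVopen hVne
    simp only [Set.mem_setOf_eq] at hx₀V hx₀free
    -- separate orbit points: build the open set U
    have key : ∀ h : G, ∃ V W : Set X, h ∈ Hset.erase 1 →
        IsOpen V ∧ IsOpen W ∧ x₀ ∈ V ∧ h • x₀ ∈ W ∧ Disjoint V W := by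
      intro h
      by_cases hh : h ∈ Hset.erase 1
      · have hne : x₀ ≠ h • x₀ := by
          have := hx₀free h (Finset.mem_of_mem_erase hh) (Finset.ne_of_mem_erase hh)
          exact fun hcon => this hcon.symm
        obtain ⟨V, W, h1, h2, h3, h4, h5⟩ := t2_separation hne
        exact ⟨V, W, fun _ => ⟨h1, h2, h3, h4, h5⟩⟩
      · exact ⟨∅, ∅, fun hc => absurd hc hh⟩
    choose V W hVW using key
    set U : Set X := ⋂ h ∈ Hset.erase 1, (V h ∩ (h⁻¹ • W h)) with hUdef
    have hUopen : IsOpen U := by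
      refine isOpen_biInter_finset fun h hh => ?_
      exact ((hVW h hh).1).inter (((hVW h hh).2.1).smul h⁻¹)
    have hx₀U : x₀ ∈ U := by
      refine Set.mem_iInter₂.mpr fun h hh => ⟨(hVW h hh).2.2.1, ?_⟩
      rw [Set.mem_smul_set_iff_inv_smul_mem]
      simpa using (hVW h hh).2.2.2.1
    have hUorth : ∀ h ∈ Hset.erase 1, ∀ x ∈ U, h⁻¹ • x ∉ U := by
      intro h hh x hxU hxU'
      have hxV : x ∈ V h := (Set.mem_iInter₂.mp hxU h hh).1
      have hxW : x ∈ W h := by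
        have := (Set.mem_iInter₂.mp hxU' h hh).2
        rw [Set.mem_smul_set_iff_inv_smul_mem] at this
        simpa using this
      exact Set.disjoint_left.mp (hVW h hh).2.2.2.2 hxV hxW
    -- Urysohn
    have hdisj : Disjoint Uᶜ {x₀} := by
      rw [Set.disjoint_right]
      intro x hx
      rw [Set.mem_singleton_iff] at hx
      subst hx
      simpa using hx₀U
    obtain ⟨fR, hf0, hf1, hf01⟩ :=
      exists_continuous_zero_one_of_isClosed hUopen.isClosed_compl
        isClosed_singleton hdisj
    set f : C(X, ℂ) := ⟨fun x => (fR x : ℂ), Complex.continuous_ofReal.comp fR.continuous⟩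
      with hfdef
    have hf_apply : ∀ x, f x = (fR x : ℂ) := fun x => rfl
    have hfx₀ : f x₀ = 1 := by
      rw [hf_apply, hf1 rfl]
      simp
    have hfU : ∀ x, x ∉ U → f x = 0 := by
      intro x hx
      rw [hf_apply, hf0 hx]
      simp
    have horth : ∀ h ∈ Hset, h ≠ 1 → f * α h f = 0 := by
      intro h hh hne
      have hhK : h ∈ Hset.erase 1 := Finset.mem_erase.mpr ⟨hne, hh⟩
      ext x
      simp only [ContinuousMap.mul_apply, ContinuousMap.zero_apply]
      rw [hα_apply]
      by_cases hxU : x ∈ U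
      · rw [hfU _ (hUorth h hhK x hxU), mul_zero]
      · rw [hfU x hxU, zero_mul]
    refine ⟨f, ?_, ?_, ⟨f * c₁ * f, cutdown f horth⟩, ?_⟩
    · intro x
      show (0 : ℂ) ≤ (fR x : ℂ)
      exact_mod_cast (hf01 x).1
    · intro x
      show (fR x : ℂ) ≤ (1 : ℂ)
      exact_mod_cast (hf01 x).2
    · rw [hEA, cutdown f horth, NonUnitalStarAlgHom.norm_map ι hι]
      calc ‖c₁‖ - ε ≤ ‖c₁ x₀‖ := le_of_lt hx₀V
        _ = ‖(f * c₁ * f) x₀‖ := by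
            simp [ContinuousMap.mul_apply, hfx₀]
        _ ≤ ‖f * c₁ * f‖ := (f * c₁ * f).norm_coe_le_norm x₀
end

section
/- Let X be a compact Hausdorff space, let h: X → X be a minimal homeomorphism, and let K ⊂ X be a compact set with hⁿ(K) ∩ K = ∅ for all nonzero integers n. Let U ⊂ X be a nonempty open set. Then there exist l ≥ 0, compact sets K₁, …, K_l ⊂ X, and positive integers n₁, …, n_l, such that K ⊂ K₁ ∪ ⋯ ∪ K_l and the sets h^{n₁}(K₁), …, h^{n_l}(K_l) are pairwise disjoint subsets of U. -/
/-- A homeomorphism of a compact Hausdorff space is minimal if its only closed invariant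
sets are `∅` and the whole space. -/
def IsMinimalHomeo {X : Type*} [TopologicalSpace X] (h : X ≃ₜ X) : Prop :=
  ∀ Y : Set X, IsClosed Y → (⇑h) '' Y = Y → Y = ∅ ∨ Y = Set.univ

section aux

variable {X : Type*} [TopologicalSpace X] (h : X ≃ₜ X)

lemma continuous_zpow_aux (n : ℤ) : Continuous ⇑(h.toEquiv ^ n) := by
  induction n using Int.induction_on with
  | zero => simpa using continuous_id
  | succ k ih =>
      have : (h.toEquiv ^ ((k : ℤ) + 1)) = h.toEquiv ^ (k : ℤ) * h.toEquiv := by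
        rw [zpow_add_one]
      rw [this]
      exact ih.comp h.continuous
  | pred k ih =>
      have : (h.toEquiv ^ (-(k : ℤ) - 1)) = h.toEquiv ^ (-(k : ℤ)) * h.toEquiv⁻¹ := by
        rw [zpow_sub_one]
      rw [this]
      have hsymm : ⇑(h.toEquiv⁻¹) = ⇑h.symm := by
        rw [Equiv.Perm.inv_def]; rfl
      show Continuous (⇑(h.toEquiv ^ (-(k : ℤ))) ∘ ⇑(h.toEquiv⁻¹))
      rw [hsymm]
      exact ih.comp h.symm.continuous

lemma zpow_apply_add_aux (m n : ℤ) (x : X) :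
    (h.toEquiv ^ m) ((h.toEquiv ^ n) x) = (h.toEquiv ^ (m + n)) x := by
  rw [zpow_add]; rfl

end aux

/-- Lemma 7.5: let `h` be a minimal homeomorphism of a compact Hausdorff space `X`, let
`K` be compact with `hⁿ(K) ∩ K = ∅` for all `n ≠ 0`, and let `U` be nonempty open.  Then
`K` is covered by compact sets `K₁, …, K_l` and there are positive integers `n₁, …, n_l`
such that the sets `h^{nⱼ}(Kⱼ)` are pairwise disjoint subsets of `U`. -/
theorem exists_compact_cover_into_open {X : Type*} [TopologicalSpace X] [CompactSpace X]
    [T2Space X] (h : X ≃ₜ X) (hmin : IsMinimalHomeo h)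
    (K : Set X) (hK : IsCompact K)
    (hKdisj : ∀ n : ℤ, n ≠ 0 → (⇑(h.toEquiv ^ n)) '' K ∩ K = ∅)
    (U : Set X) (hU : IsOpen U) (hUne : U.Nonempty) :
    ∃ (l : ℕ) (Ks : Fin l → Set X) (ns : Fin l → ℕ),
      (∀ i, IsCompact (Ks i)) ∧ (∀ i, 0 < ns i) ∧
      K ⊆ ⋃ i, Ks i ∧
      (∀ i, (⇑(h.toEquiv ^ (ns i : ℤ))) '' Ks i ⊆ U) ∧
      (∀ i j, i ≠ j → Disjoint ((⇑(h.toEquiv ^ (ns i : ℤ))) '' Ks i) ((⇑(h.toEquiv ^ (ns j : ℤ))) '' Ks j)) := by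
  classical
  set e := h.toEquiv with he
  have hcont : ∀ n : ℤ, Continuous ⇑(e ^ n) := continuous_zpow_aux h
  -- Step 1: every point visits U under some power.
  set Y : Set X := ⋂ n : ℤ, (⇑(e ^ n)) ⁻¹' Uᶜ with hY
  have hYclosed : IsClosed Y :=
    isClosed_iInter fun n => (hU.isClosed_compl).preimage (hcont n)
  have hkey : ∀ n : ℤ, ∀ x : X, (e ^ n) (e.symm x) = (e ^ (n - 1)) x := by
    intro n x
    rw [zpow_sub_one]
    rw [Equiv.Perm.mul_apply, Equiv.Perm.inv_def]
  have hYinv : (⇑h) '' Y = Y := by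
    ext x
    have : (⇑h) '' Y = ⇑e '' Y := rfl
    rw [this, Set.mem_image_equiv]
    simp only [hY, Set.mem_iInter, Set.mem_preimage, Set.mem_compl_iff]
    constructor
    · intro hx n
      have := hx (n + 1)
      rwa [hkey, add_sub_cancel_right] at this
    · intro hx n
      rw [hkey]
      exact hx (n - 1)
  have hYne : Y ≠ Set.univ := by
    intro hEq
    obtain ⟨u, hu⟩ := hUne
    have : u ∈ Y := hEq ▸ Set.mem_univ u
    simp only [hY, Set.mem_iInter, Set.mem_preimage, Set.mem_compl_iff] at this
    exact this 0 (by simpa using hu)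
  have hYempty : Y = ∅ := (hmin Y hYclosed hYinv).resolve_right hYne
  have hvisit : ∀ x : X, ∃ n : ℤ, (e ^ n) x ∈ U := by
    intro x
    by_contra hcon
    push_neg at hcon
    have : x ∈ Y := by
      simp only [hY, Set.mem_iInter, Set.mem_preimage, Set.mem_compl_iff]
      exact hcon
    rw [hYempty] at this
    exact this
  -- Step 2: finite subcover of univ by (e^n)⁻¹' U.
  obtain ⟨T, hT⟩ := isCompact_univ.elim_finite_subcover (fun n : ℤ => (⇑(e ^ n)) ⁻¹' U)
    (fun n => hU.preimage (hcont n))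
    (by intro x _; obtain ⟨n, hn⟩ := hvisit x; exact Set.mem_iUnion.2 ⟨n, hn⟩)
  -- Step 3: positive return times.
  set N : ℕ := 1 + T.sup fun n => (-n).toNat with hN
  have hvisitpos : ∀ x : X, ∃ m : ℕ, 0 < m ∧ (e ^ (m : ℤ)) x ∈ U := by
    intro x
    have hx : (e ^ (N : ℤ)) x ∈ ⋃ n ∈ T, (⇑(e ^ n)) ⁻¹' U := hT (Set.mem_univ _)
    obtain ⟨n, hnT, hn⟩ := Set.mem_iUnion₂.1 hx
    have hpos : 0 < n + (N : ℤ) := by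
      have h1 : (-n).toNat ≤ T.sup fun n => (-n).toNat := Finset.le_sup (f := fun n => (-n).toNat) hnT
      have h2 : -n ≤ ((-n).toNat : ℤ) := Int.self_le_toNat _
      omega
    refine ⟨(n + (N : ℤ)).toNat, by omega, ?_⟩
    have : ((( n + (N : ℤ)).toNat : ℤ)) = n + (N : ℤ) := Int.toNat_of_nonneg hpos.le
    rw [this]
    rw [← zpow_apply_add_aux h n (N : ℤ) x]
    exact hn
  -- Step 4: cover K by opens indexed by ℕ.
  set V : ℕ → Set X := fun m => if 0 < m then (⇑(e ^ (m : ℤ))) ⁻¹' U else ∅ with hV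
  have hVopen : ∀ m, IsOpen (V m) := by
    intro m
    by_cases hm : 0 < m
    · simp only [hV, if_pos hm]; exact hU.preimage (hcont _)
    · simp only [hV, if_neg hm]; exact isOpen_empty
  obtain ⟨t, ht⟩ := hK.elim_finite_subcover V hVopen (by
    intro x _
    obtain ⟨m, hm, hmx⟩ := hvisitpos x
    exact Set.mem_iUnion.2 ⟨m, by simp only [hV, if_pos hm]; exact hmx⟩)
  set t' : Finset ℕ := t.filter (0 < ·) with ht'
  have htpos : ∀ m ∈ t', 0 < m := fun m hm => (Finset.mem_filter.1 hm).2
  have hKcov : K ⊆ ⋃ m ∈ t', V m := by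
    intro x hx
    obtain ⟨m, hmt, hmx⟩ := Set.mem_iUnion₂.1 (ht hx)
    have hm : 0 < m := by
      by_contra hm
      simp only [hV, if_neg hm] at hmx
      exact hmx
    exact Set.mem_iUnion₂.2 ⟨m, Finset.mem_filter.2 ⟨hmt, hm⟩, hmx⟩
  -- Step 5: shrink to compact sets.
  obtain ⟨C, hCcomp, hCsub, hCeq⟩ :=
    hK.finite_compact_cover t' V (fun m _ => hVopen m) hKcov
  have hCK : ∀ m ∈ t', C m ⊆ K := by
    intro m hm
    rw [hCeq]
    exact Set.subset_biUnion_of_mem hm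
  -- Step 6: enumerate t'.
  set l : ℕ := t'.card with hl
  set g : {x // x ∈ t'} ≃ Fin l := t'.equivFin with hg
  refine ⟨l, fun i => C ((g.symm i : ℕ)), fun i => (g.symm i : ℕ), fun i => hCcomp _,
    fun i => htpos _ (g.symm i).2, ?_, ?_, ?_⟩
  · -- cover
    intro x hx
    rw [hCeq] at hx
    obtain ⟨m, hmt, hmx⟩ := Set.mem_iUnion₂.1 hx
    refine Set.mem_iUnion.2 ⟨g ⟨m, hmt⟩, ?_⟩
    simpa using hmx
  · -- image in U
    intro i
    have hm := (g.symm i).2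
    have hsub := hCsub ((g.symm i : ℕ))
    rw [hV] at hsub
    simp only [if_pos (htpos _ hm)] at hsub
    exact Set.image_subset_iff.2 hsub
  · -- disjointness
    intro i j hij
    set a : ℕ := (g.symm i : ℕ)
    set b : ℕ := (g.symm j : ℕ)
    have hab : a ≠ b := by
      intro hEq
      apply hij
      have : g.symm i = g.symm j := Subtype.ext hEq
      exact g.symm.injective this ▸ (by rw [← g.apply_symm_apply i, this, g.apply_symm_apply])
    have hane : (b : ℤ) - (a : ℤ) ≠ 0 := by
      intro hEq; exact hab (by omega)
    have hKab : (⇑(e ^ ((b : ℤ) - (a : ℤ)))) '' K ∩ K = ∅ := hKdisj _ hane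
    have hinj : Function.Injective ⇑(e ^ ((a : ℤ))) := (e ^ ((a : ℤ))).injective
    have himg : (⇑(e ^ ((a : ℤ)))) '' ((⇑(e ^ ((b : ℤ) - (a : ℤ)))) '' K ∩ K) =
        (⇑(e ^ ((b : ℤ)))) '' K ∩ (⇑(e ^ ((a : ℤ)))) '' K := by
      rw [Set.image_inter hinj]
      congr 1
      have hfun : (⇑(e ^ ((a : ℤ)))) ∘ (⇑(e ^ ((b : ℤ) - (a : ℤ)))) = ⇑(e ^ ((b : ℤ))) := by
        funext x
        simp only [Function.comp_apply]
        rw [zpow_apply_add_aux h ((a : ℤ)) ((b : ℤ) - (a : ℤ)) x]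
        have harith : (a : ℤ) + ((b : ℤ) - (a : ℤ)) = (b : ℤ) := by ring
        rw [harith]
      rw [← Set.image_comp, hfun]
    have hdisjK : (⇑(e ^ ((b : ℤ)))) '' K ∩ (⇑(e ^ ((a : ℤ)))) '' K = ∅ := by
      rw [← himg, hKab, Set.image_empty]
    rw [Set.disjoint_iff_inter_eq_empty]
    have h1 : (⇑(e ^ ((a : ℤ)))) '' C a ⊆ (⇑(e ^ ((a : ℤ)))) '' K :=
      Set.image_mono (hCK a (g.symm i).2)
    have h2 : (⇑(e ^ ((b : ℤ)))) '' C b ⊆ (⇑(e ^ ((b : ℤ)))) '' K :=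
      Set.image_mono (hCK b (g.symm j).2)
    apply Set.eq_empty_of_subset_empty
    calc (⇑(e ^ ((a : ℤ)))) '' C a ∩ (⇑(e ^ ((b : ℤ)))) '' C b
        ⊆ (⇑(e ^ ((a : ℤ)))) '' K ∩ (⇑(e ^ ((b : ℤ)))) '' K := Set.inter_subset_inter h1 h2
      _ = ∅ := by rw [Set.inter_comm]; exact hdisjK
end
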